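/- arXiv:1908.03659 — 6 statements merged into one kernel-verified Lean document; each statement's English description precedes it below -/
import Mathlib

section
/- Let $G$ be a connected graph, $P$ a longest path of $G$ with endpoint $a$, and $\operatorname{END}(P,a)$ the set of vertices $x$ such that some path obtained from $P$ by a sequence of Pósa rotations (keeping $a$ fixed as an endpoint) has $x$ as its other endpoint. Then $|N(\operatorname{END}(P,a))| < 2|\operatorname{END}(P,a)|$. -/
open SimpleGraph

variable {V : Type*} [Fintype V]

/-- A (nonempty) path in `G`, represented as the list of its vertices. -/
def IsPathList (G : SimpleGraph V) (L : List V) : Prop :=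
  L ≠ [] ∧ L.Chain' G.Adj ∧ L.Nodup

/-- A Pósa rotation: if `L = x₀ … x_t` is a path and `x_t x_i ∈ E(G)`, the rotated
path is `L' = x₀ … x_i x_t x_{t-1} … x_{i+1}`.  Writing `L = P ++ v :: S` with
`v = x_i`, the rotation at the edge from the last vertex of `S` (namely `x_t`)
to `v` produces `L' = P ++ v :: S.reverse`. -/
def Rotation (G : SimpleGraph V) (L L' : List V) : Prop :=
  ∃ (P S : List V) (v : V) (hS : S ≠ []),
    L = P ++ v :: S ∧ L' = P ++ v :: S.reverse ∧ G.Adj (S.getLast hS) v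

/-- `ENDSet G L`: the set of vertices `x` that occur as the non-fixed endpoint of
some path obtained from `L` by a sequence of Pósa rotations (the first vertex of
`L` stays fixed throughout). -/
def ENDSet (G : SimpleGraph V) (L : List V) : Set V :=
  {x | ∃ L', Relation.ReflTransGen (Rotation G) L L' ∧ L'.getLast? = some x}

/-- The external neighborhood `N(X)`. -/
def extN (G : SimpleGraph V) (X : Set V) : Set V :=
  {u | u ∉ X ∧ ∃ x ∈ X, G.Adj x u}


set_option linter.unusedSectionVars false

/-- `x` and `y` are consecutive (in this order) in `L`. -/
def ConsecIn (L : List V) (x y : V) : Prop := ∃ A B : List V, L = A ++ x :: y :: B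

lemma not_consecIn_nil (x y : V) : ¬ ConsecIn [] x y := by
  rintro ⟨A, B, h⟩
  have := congrArg List.length h
  simp at this

lemma not_consecIn_singleton (a x y : V) : ¬ ConsecIn [a] x y := by
  rintro ⟨A, B, h⟩
  have := congrArg List.length h
  simp at this
  omega

lemma consecIn_append {A B : List V} {x y : V} :
    ConsecIn (A ++ B) x y ↔
      ConsecIn A x y ∨ ConsecIn B x y ∨ (A.getLast? = some x ∧ B.head? = some y) := by
  constructor
  · rintro ⟨C, D, h⟩
    rcases List.append_eq_append_iff.1 h with ⟨a', h1, h2⟩ | ⟨c', h1, h2⟩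
    · exact Or.inr (Or.inl ⟨a', D, h2⟩)
    · match c', h2 with
      | [], h2 => exact Or.inr (Or.inl ⟨[], D, by simpa using h2.symm⟩)
      | [z], h2 =>
        simp at h2
        refine Or.inr (Or.inr ⟨?_, ?_⟩)
        · rw [h1, h2.1]; simp [List.getLast?_concat]
        · rw [← h2.2]; simp
      | z :: w :: c'', h2 =>
        simp at h2
        exact Or.inl ⟨C, c'', by rw [h1, h2.1, h2.2.1]⟩
  · rintro (⟨C, D, h⟩ | ⟨C, D, h⟩ | ⟨h1, h2⟩)
    · exact ⟨C, D ++ B, by rw [h]; simp⟩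
    · exact ⟨A ++ C, D, by rw [h]; simp⟩
    · obtain ⟨A', hA'⟩ : ∃ A', A = A' ++ [x] := by
        have hne : A ≠ [] := by rintro rfl; simp at h1
        refine ⟨A.dropLast, ?_⟩
        rw [List.getLast?_eq_getLast hne, Option.some_inj] at h1
        conv_lhs => rw [← A.dropLast_append_getLast hne]
        rw [h1]
      obtain ⟨B', hB'⟩ : ∃ B', B = y :: B' := by
        cases B with
        | nil => simp at h2
        | cons b B' => simp at h2; exact ⟨B', by rw [h2]⟩
      exact ⟨A', B', by rw [hA', hB']; simp⟩

lemma consecIn_cons {a : V} {l : List V} {x y : V} :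
    ConsecIn (a :: l) x y ↔ (a = x ∧ l.head? = some y) ∨ ConsecIn l x y := by
  have := @consecIn_append V _ [a] l x y
  simp only [List.cons_append, List.nil_append] at this
  rw [this]
  simp [not_consecIn_singleton]
  tauto

lemma ConsecIn.reverse {L : List V} {x y : V} (h : ConsecIn L x y) :
    ConsecIn L.reverse y x := by
  obtain ⟨A, B, rfl⟩ := h
  exact ⟨B.reverse, A.reverse, by simp⟩

lemma ConsecIn.mem_left {L : List V} {x y : V} (h : ConsecIn L x y) : x ∈ L := by
  obtain ⟨A, B, rfl⟩ := h; simp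

lemma ConsecIn.mem_right {L : List V} {x y : V} (h : ConsecIn L x y) : y ∈ L := by
  obtain ⟨A, B, rfl⟩ := h; simp

lemma nodup_split_unique {x : V} :
    ∀ (A A' S S' : List V), (A ++ x :: S).Nodup → A ++ x :: S = A' ++ x :: S' →
      A = A' ∧ S = S' := by
  intro A
  induction A with
  | nil =>
    intro A' S S' hnd h
    cases A' with
    | nil => simp at h ⊢; exact h
    | cons b A'' =>
      simp only [List.nil_append, List.cons_append, List.cons.injEq] at h
      exfalso
      have hx : x ∈ S := by rw [h.2]; simp
      simp only [List.nil_append, List.nodup_cons] at hnd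
      exact hnd.1 hx
  | cons a A'' ih =>
    intro A' S S' hnd h
    cases A' with
    | nil =>
      simp only [List.nil_append, List.cons_append, List.cons.injEq] at h
      exfalso
      rw [List.cons_append, List.nodup_cons, h.1] at hnd
      exact hnd.1 (by simp)
    | cons b A''' =>
      simp at h
      have := ih A''' S S' (by simpa using hnd.of_cons) h.2
      exact ⟨by rw [h.1, this.1], this.2⟩

lemma consec_unique_left {L : List V} (hnd : L.Nodup) {x y y' : V}
    (h1 : ConsecIn L x y) (h2 : ConsecIn L x y') : y = y' := by
  obtain ⟨A, B, rfl⟩ := h1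
  obtain ⟨A', B', h⟩ := h2
  have := nodup_split_unique A A' (y :: B) (y' :: B') hnd h
  exact (List.cons.injEq _ _ _ _ ▸ this.2).1

lemma consec_unique_right {L : List V} (hnd : L.Nodup) {x x' y : V}
    (h1 : ConsecIn L x y) (h2 : ConsecIn L x' y) : x = x' :=
  consec_unique_left (List.nodup_reverse.2 hnd) h1.reverse h2.reverse

lemma consec_ne_head {L : List V} (hnd : L.Nodup) {a x y : V}
    (hh : L.head? = some a) (h : ConsecIn L x y) : y ≠ a := by
  obtain ⟨A, B, rfl⟩ := h
  intro hya
  subst hya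
  cases A with
  | nil =>
    simp only [List.nil_append, List.head?_cons, Option.some_inj] at hh
    subst hh
    simp at hnd
  | cons c A' =>
    simp only [List.cons_append, List.head?_cons, Option.some_inj] at hh
    subst hh
    have := List.disjoint_of_nodup_append hnd
    exact this (List.mem_cons_self) (by simp)

lemma consec_ne_getLast {L : List V} (hnd : L.Nodup) {z x y : V}
    (hh : L.getLast? = some z) (h : ConsecIn L x y) : x ≠ z := by
  have : L.reverse.head? = some z := by rw [List.head?_reverse]; exact hh
  exact consec_ne_head (List.nodup_reverse.2 hnd) this h.reverse

section Rot
variable {G : SimpleGraph V}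

lemma Rotation.perm {M M' : List V} (h : Rotation G M M') : M'.Perm M := by
  obtain ⟨P, S, v, hS, rfl, rfl, _⟩ := h
  exact (List.Perm.append_left P (List.Perm.cons v (S.reverse_perm)))

lemma reach_perm {L L' : List V} (h : Relation.ReflTransGen (Rotation G) L L') :
    L'.Perm L := by
  induction h with
  | refl => exact List.Perm.refl L
  | tail _ hrot ih => exact hrot.perm.trans ih

lemma Rotation.head? {M M' : List V} (h : Rotation G M M') : M'.head? = M.head? := by
  obtain ⟨P, S, v, hS, rfl, rfl, _⟩ := h
  cases P <;> simp

lemma reach_head? {L L' : List V} (h : Relation.ReflTransGen (Rotation G) L L') :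
    L'.head? = L.head? := by
  induction h with
  | refl => rfl
  | tail _ hrot ih => rw [hrot.head?, ih]

lemma Rotation.isPathList {M M' : List V} (hM : IsPathList G M) (h : Rotation G M M') :
    IsPathList G M' := by
  obtain ⟨hne, hch, hnd⟩ := hM
  obtain ⟨P, S, v, hS, rfl, rfl, hadj⟩ := h
  refine ⟨by simp, ?_, ?_⟩
  · unfold List.Chain' at hch ⊢
    rw [List.isChain_append] at hch ⊢
    refine ⟨hch.1, ?_, hch.2.2⟩
    have hchS : (v :: S).Chain' G.Adj := hch.2.1
    unfold List.Chain' at hchS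
    rw [List.isChain_cons] at hchS ⊢
    constructor
    · intro y hy
      rw [List.head?_reverse] at hy
      rw [List.getLast?_eq_getLast hS, Option.mem_def, Option.some_inj] at hy
      exact hy ▸ hadj.symm
    · rw [List.isChain_reverse]
      exact hchS.2.imp (fun _ _ hab => hab.symm)
  · refine (List.Perm.nodup_iff ?_).2 hnd
    exact (List.Perm.append_left P (List.Perm.cons v (S.reverse_perm)))

lemma reach_isPathList {L L' : List V} (hL : IsPathList G L)
    (h : Relation.ReflTransGen (Rotation G) L L') : IsPathList G L' := by
  induction h with
  | refl => exact hL
  | tail _ hrot ih => exact hrot.isPathList ih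

lemma getLast_mem_ENDSet {L : List V} (hne : L ≠ []) :
    L.getLast hne ∈ ENDSet G L :=
  ⟨L, Relation.ReflTransGen.refl, List.getLast?_eq_getLast hne⟩

/-- Edge persistence: an edge of `L` whose both ends avoid `END` survives
(as an unordered consecutive pair) in every rotated path. -/
lemma persist {L : List V} {x y : V} (hxy : ConsecIn L x y)
    (hx : x ∉ ENDSet G L) (hy : y ∉ ENDSet G L) :
    ∀ {L'}, Relation.ReflTransGen (Rotation G) L L' →
      ConsecIn L' x y ∨ ConsecIn L' y x := by
  intro L' h
  induction h with
  | refl => exact Or.inl hxy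
  | @tail M M' hreach hrot ih =>
    obtain ⟨P, S, v, hS, rfl, rfl, hadj⟩ := hrot
    obtain ⟨s₀, S', rfl⟩ : ∃ s₀ S', S = s₀ :: S' := by
      cases S with
      | nil => exact absurd rfl hS
      | cons s₀ S' => exact ⟨s₀, S', rfl⟩
    have hs0END : s₀ ∈ ENDSet G L := by
      refine ⟨P ++ v :: (s₀ :: S').reverse, hreach.tail ⟨P, s₀ :: S', v, hS, rfl, rfl, hadj⟩, ?_⟩
    -- goal: getLast? = some s₀
      show (P ++ v :: ((s₀ :: S').reverse)).getLast? = some s₀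
      have : P ++ v :: ((s₀ :: S').reverse) = (P ++ v :: S'.reverse) ++ [s₀] := by
        simp
      rw [this, List.getLast?_concat]
    -- helper to transfer one orientation
    have tr : ∀ x y : V, x ∉ ENDSet G L → y ∉ ENDSet G L →
        ConsecIn (P ++ v :: s₀ :: S') x y →
        ConsecIn (P ++ v :: (s₀ :: S').reverse) x y ∨
        ConsecIn (P ++ v :: (s₀ :: S').reverse) y x := by
      intro x y hx hy hc
      rw [consecIn_append] at hc
      rcases hc with hc | hc | ⟨h1, h2⟩
      · exact Or.inl (consecIn_append.2 (Or.inl hc))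
      · rw [consecIn_cons] at hc
        rcases hc with ⟨rfl, hhd⟩ | hc
        · -- x = v and y = s₀ : contradiction, s₀ ∈ END
          simp at hhd
          exact absurd (hhd ▸ hs0END) hy
        · -- inside S
          right
          refine consecIn_append.2 (Or.inr (Or.inl ?_))
          rw [consecIn_cons]
          exact Or.inr hc.reverse
      · -- last of P, head v
        left
        simp at h2
        subst h2
        exact consecIn_append.2 (Or.inr (Or.inr ⟨h1, rfl⟩))
    rcases ih with hc | hc
    · exact tr x y hx hy hc
    · exact (tr y x hy hx hc).symm

end Rot

section Main
variable {G : SimpleGraph V}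

lemma key_lemma {L : List V} (hL : IsPathList G L)
    (hlongest : ∀ L' : List V, IsPathList G L' → L'.length ≤ L.length)
    {u : V} (hu : u ∈ extN G (ENDSet G L)) :
    (∃ w ∈ ENDSet G L, ConsecIn L w u) ∨ (∃ w ∈ ENDSet G L, ConsecIn L u w) := by
  obtain ⟨huE, x, hxE, hadj⟩ := hu
  obtain ⟨L₁, hreach, hlast⟩ := hxE
  have hP₁ := reach_isPathList hL hreach
  have hperm := reach_perm hreach
  have nodup₁ := hP₁.2.2
  -- u lies on L₁
  have huL₁ : u ∈ L₁ := by
    by_contra huL₁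
    have hpath : IsPathList G (L₁ ++ [u]) := by
      refine ⟨by simp, ?_, ?_⟩
      · unfold List.Chain'
        rw [List.isChain_append]
        refine ⟨hP₁.2.1, List.isChain_singleton u, ?_⟩
        intro p hp q hq
        simp at hq
        subst hq
        rw [hlast] at hp
        simp at hp
        subst hp
        exact hadj
      · rw [List.nodup_append]
        exact ⟨nodup₁, by simp, by intro q hq r hr; simp at hr; subst hr; rintro rfl; exact huL₁ hq⟩
    have hlen := hlongest _ hpath
    rw [List.length_append, hperm.length_eq] at hlen
    simp at hlen
  obtain ⟨P, S, hsplit⟩ := List.append_of_mem huL₁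
  have hSne : S ≠ [] := by
    rintro rfl
    rw [hsplit, List.getLast?_concat] at hlast
    simp at hlast
    exact huE (hlast ▸ ⟨L₁, hreach, hlast ▸ hsplit ▸ List.getLast?_concat⟩)
  have hxgl : S.getLast hSne = x := by
    have h1 : L₁ = (P ++ u :: S.dropLast) ++ [S.getLast hSne] := by
      rw [hsplit]
      conv_lhs => rw [← S.dropLast_append_getLast hSne]
      simp
    rw [h1, List.getLast?_concat] at hlast
    simpa using hlast
  have hrot : Rotation G L₁ (P ++ u :: S.reverse) :=
    ⟨P, S, u, hSne, hsplit, rfl, by rw [hxgl]; exact hadj⟩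
  obtain ⟨s₀, S', rfl⟩ : ∃ s₀ S'', S = s₀ :: S'' := by
    cases S with
    | nil => exact absurd rfl hSne
    | cons s₀ S'' => exact ⟨s₀, S'', rfl⟩
  have hs0E : s₀ ∈ ENDSet G L := by
    refine ⟨P ++ u :: (s₀ :: S').reverse, hreach.tail hrot, ?_⟩
    have h2 : P ++ u :: (s₀ :: S').reverse = (P ++ u :: S'.reverse) ++ [s₀] := by simp
    rw [h2, List.getLast?_concat]
  have hcons1 : ConsecIn L₁ u s₀ := ⟨P, S', hsplit⟩
  by_contra hcon
  push_neg at hcon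
  have huL : u ∈ L := hperm.subset huL₁
  obtain ⟨P₀, S₀, hsplit₀⟩ := List.append_of_mem huL
  have hS₀ne : S₀ ≠ [] := by
    rintro rfl
    exact huE ⟨L, Relation.ReflTransGen.refl, hsplit₀ ▸ List.getLast?_concat⟩
  obtain ⟨t₀, S₀', rfl⟩ : ∃ t₀ S₀'', S₀ = t₀ :: S₀'' := by
    cases S₀ with
    | nil => exact absurd rfl hS₀ne
    | cons t₀ S₀'' => exact ⟨t₀, S₀'', rfl⟩
  have hconsL : ConsecIn L u t₀ := ⟨P₀, S₀', hsplit₀⟩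
  have ht₀E : t₀ ∉ ENDSet G L := fun h => hcon.2 t₀ h hconsL
  have hpers := persist hconsL huE ht₀E hreach
  rcases hpers with hcase | hcase
  · exact ht₀E (consec_unique_left nodup₁ hcons1 hcase ▸ hs0E)
  · -- ConsecIn L₁ t₀ u
    cases P₀ with
    | nil =>
      have hhd : L₁.head? = some u := by
        rw [reach_head? hreach, hsplit₀]
        simp
      exact absurd rfl (consec_ne_head nodup₁ hhd hcase)
    | cons p₀ P₀' =>
      have hP₀ne : (p₀ :: P₀') ≠ ([] : List V) := by simp
      set w₀ := (p₀ :: P₀').getLast hP₀ne with hw₀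
      have hconsL2 : ConsecIn L w₀ u := by
        refine ⟨(p₀ :: P₀').dropLast, t₀ :: S₀', ?_⟩
        rw [hsplit₀]
        conv_lhs => rw [← (p₀ :: P₀').dropLast_append_getLast hP₀ne]
        simp [hw₀]
      have hw₀E : w₀ ∉ ENDSet G L := fun h => hcon.1 w₀ h hconsL2
      have hpers2 := persist hconsL2 hw₀E huE hreach
      rcases hpers2 with hcase2 | hcase2
      · -- ConsecIn L₁ w₀ u : then w₀ = t₀, impossible by nodup of L
        have hwt : w₀ = t₀ := consec_unique_right nodup₁ hcase2 hcase
        have hdisj := List.disjoint_of_nodup_append (hsplit₀ ▸ hL.2.2)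
        exact hdisj (List.getLast_mem hP₀ne) (by rw [← hw₀, hwt]; simp)
      · -- ConsecIn L₁ u w₀ : then w₀ = s₀ ∈ END, contra
        exact hw₀E (consec_unique_left nodup₁ hcons1 hcase2 ▸ hs0E)

end Main

/-- For a longest path `P` with endpoint `a` in a connected graph,
`|N(END(P,a))| < 2 |END(P,a)|`. -/
theorem extN_ENDSet_lt (G : SimpleGraph V) (hconn : G.Connected)
    (L : List V) (a : V)
    (hL : IsPathList G L) (ha : L.head? = some a)
    (hlongest : ∀ L' : List V, IsPathList G L' → L'.length ≤ L.length) :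
    (extN G (ENDSet G L)).ncard < 2 * (ENDSet G L).ncard := by
  classical
  set E := ENDSet G L with hEdef
  have hne := hL.1
  set lst := L.getLast hne with hlstdef
  have hlstE : lst ∈ E := getLast_mem_ENDSet hne
  have hlst? : L.getLast? = some lst := List.getLast?_eq_getLast hne
  set A : Set V := {u | ∃ w, w ∈ E ∧ ConsecIn L w u} with hAdef
  set B : Set V := {u | ∃ w, w ∈ E ∧ ConsecIn L u w} with hBdef
  have hsub : extN G E ⊆ A ∪ B := by
    intro u hu
    rcases key_lemma hL hlongest hu with ⟨w, hwE, hc⟩ | ⟨w, hwE, hc⟩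
    · exact Or.inl ⟨w, hwE, hc⟩
    · exact Or.inr ⟨w, hwE, hc⟩
  have hndL := hL.2.2
  have hA : A.ncard ≤ (E \ {lst}).ncard := by
    refine Set.ncard_le_ncard_of_injOn
      (fun u => if h : ∃ w, w ∈ E ∧ ConsecIn L w u then h.choose else u) ?_ ?_
      ((Set.toFinite E).diff)
    · intro u hu
      have hu' : ∃ w, w ∈ E ∧ ConsecIn L w u := hu
      simp only [dif_pos hu']
      obtain ⟨hw, hc⟩ := hu'.choose_spec
      exact ⟨hw, consec_ne_getLast hndL hlst? hc⟩
    · intro u1 h1 u2 h2 heq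
      have h1' : ∃ w, w ∈ E ∧ ConsecIn L w u1 := h1
      have h2' : ∃ w, w ∈ E ∧ ConsecIn L w u2 := h2
      simp only [dif_pos h1', dif_pos h2'] at heq
      obtain ⟨hw1, hc1⟩ := h1'.choose_spec
      obtain ⟨hw2, hc2⟩ := h2'.choose_spec
      rw [heq] at hc1
      exact consec_unique_left hndL hc1 hc2
  have hB : B.ncard ≤ E.ncard := by
    refine Set.ncard_le_ncard_of_injOn
      (fun u => if h : ∃ w, w ∈ E ∧ ConsecIn L u w then h.choose else u) ?_ ?_
      (Set.toFinite E)
    · intro u hu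
      have hu' : ∃ w, w ∈ E ∧ ConsecIn L u w := hu
      simp only [dif_pos hu']
      exact hu'.choose_spec.1
    · intro u1 h1 u2 h2 heq
      have h1' : ∃ w, w ∈ E ∧ ConsecIn L u1 w := h1
      have h2' : ∃ w, w ∈ E ∧ ConsecIn L u2 w := h2
      simp only [dif_pos h1', dif_pos h2'] at heq
      obtain ⟨hw1, hc1⟩ := h1'.choose_spec
      obtain ⟨hw2, hc2⟩ := h2'.choose_spec
      rw [heq] at hc1
      exact consec_unique_right hndL hc1 hc2
  have hEs : (E \ {lst}).ncard = E.ncard - 1 :=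
    Set.ncard_diff_singleton_of_mem hlstE
  have hEpos : 0 < E.ncard := (Set.ncard_pos (Set.toFinite E)).2 ⟨lst, hlstE⟩
  have h1 : (extN G E).ncard ≤ (A ∪ B).ncard :=
    Set.ncard_le_ncard hsub ((Set.toFinite A).union (Set.toFinite B))
  have h2 : (A ∪ B).ncard ≤ A.ncard + B.ncard := Set.ncard_union_le A B
  omega
end

section
/- In the uniform attachment graph $G_{n,k}$, for any two $\ell$-subsets $X, Y$ of $[n]$ with $X \preceq_\ell Y$ in the lexicographic (componentwise) order, the random variable $|N(X)|$ stochastically dominates $|N(Y)|$; that is, for every integer $m$, $\mathbb{P}(|N(X)| \ge m) \ge \mathbb{P}(|N(Y)| \ge m)$. -/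
open Finset
open scoped Classical

noncomputable def UAValid (n k : ℕ) : Finset (Fin n → Fin k → Fin n) :=
  Finset.univ.filter (fun z => ∀ j i, (z j i : ℕ) < max (j : ℕ) 1)

noncomputable def UAGraph (n k : ℕ) (z : Fin n → Fin k → Fin n) :
    SimpleGraph (Fin n) :=
  SimpleGraph.fromRel (fun u v => (u : ℕ) < v ∧ ∃ i, z v i = u)

noncomputable def UAProb (n k : ℕ) (E : (Fin n → Fin k → Fin n) → Prop) : ℝ :=
  ((UAValid n k).filter E).card / (UAValid n k).card

noncomputable def extNbhd {V : Type*} [Fintype V] (G : SimpleGraph V)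
    (X : Finset V) : Finset V :=
  Finset.univ.filter (fun u => u ∉ X ∧ ∃ x ∈ X, G.Adj x u)

section Aux

variable {n k : ℕ}

lemma mem_UAValid {z : Fin n → Fin k → Fin n} :
    z ∈ UAValid n k ↔ ∀ j i, (z j i : ℕ) < max (j : ℕ) 1 := by
  simp [UAValid]

/-- The swap bijection on choice sequences, for `b = a+1`. -/
noncomputable def swapC (a b : Fin n) (z : Fin n → Fin k → Fin n) :
    Fin n → Fin k → Fin n :=
  fun j i =>
    if j = a then (if z b i = a then z a i else z b i)
    else if j = b then (if z b i = a then a else z a i)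
    else Equiv.swap a b (z j i)

lemma swapC_apply_a {a b : Fin n} {z : Fin n → Fin k → Fin n} {i : Fin k} :
    swapC a b z a i = if z b i = a then z a i else z b i := by
  unfold swapC; rw [if_pos rfl]

lemma swapC_apply_b {a b : Fin n} (hba : b ≠ a) {z : Fin n → Fin k → Fin n}
    {i : Fin k} :
    swapC a b z b i = if z b i = a then a else z a i := by
  unfold swapC; rw [if_neg hba, if_pos rfl]

lemma swapC_apply_other {a b j : Fin n} (h1 : j ≠ a) (h2 : j ≠ b)
    {z : Fin n → Fin k → Fin n} {i : Fin k} :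
    swapC a b z j i = Equiv.swap a b (z j i) := by
  unfold swapC; rw [if_neg h1, if_neg h2]

lemma swapC_valid {a b : Fin n} (hb : (b : ℕ) = (a : ℕ) + 1)
    {z : Fin n → Fin k → Fin n} (hz : ∀ j i, (z j i : ℕ) < max (j : ℕ) 1) :
    ∀ j i, (swapC a b z j i : ℕ) < max (j : ℕ) 1 := by
  have hba : b ≠ a := fun h => by rw [h] at hb; omega
  intro j i
  have hza := hz a i
  have hzb := hz b i
  have hzj := hz j i
  by_cases hja : j = a
  · subst j
    rw [swapC_apply_a]
    by_cases hc : z b i = a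
    · rw [if_pos hc]; exact hza
    · rw [if_neg hc]
      have h1 : (z b i : ℕ) ≠ (a : ℕ) := fun h => hc (Fin.ext h)
      omega
  · by_cases hjb : j = b
    · subst j
      rw [swapC_apply_b hba]
      by_cases hc : z b i = a
      · rw [if_pos hc]; omega
      · rw [if_neg hc]; omega
    · rw [swapC_apply_other hja hjb]
      have h1 : (j : ℕ) ≠ (a : ℕ) := fun h => hja (Fin.ext h)
      have h2 : (j : ℕ) ≠ (b : ℕ) := fun h => hjb (Fin.ext h)
      rw [Equiv.swap_apply_def]
      split_ifs with e1 e2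
      · have : (z j i : ℕ) = a := by rw [e1]
        omega
      · have : (z j i : ℕ) = b := by rw [e2]
        omega
      · exact hzj

lemma swapC_swapC {a b : Fin n} (hb : (b : ℕ) = (a : ℕ) + 1)
    {z : Fin n → Fin k → Fin n} (hz : ∀ j i, (z j i : ℕ) < max (j : ℕ) 1) :
    swapC a b (swapC a b z) = z := by
  have hba : b ≠ a := fun h => by rw [h] at hb; omega
  funext j i
  have hza := hz a i
  have hzb := hz b i
  by_cases hc : z b i = a
  · have hzana : True := trivial
    by_cases hja : j = a
    · subst j
      rw [swapC_apply_a, swapC_apply_b hba, swapC_apply_a, if_pos hc, if_pos hc,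
        if_pos rfl]
    · by_cases hjb : j = b
      · subst j
        rw [swapC_apply_b hba, swapC_apply_b hba, if_pos hc, if_pos rfl, hc]
      · rw [swapC_apply_other hja hjb, swapC_apply_other hja hjb,
          Equiv.swap_apply_self]
  · have h1 : (z b i : ℕ) ≠ (a : ℕ) := fun h => hc (Fin.ext h)
    have h2 : z a i ≠ a := by
      intro h
      have := congrArg Fin.val h
      omega
    by_cases hja : j = a
    · subst j
      rw [swapC_apply_a, swapC_apply_b hba, swapC_apply_a, if_neg hc, if_neg hc,
        if_neg h2]
    · by_cases hjb : j = b
      · subst j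
        rw [swapC_apply_b hba, swapC_apply_b hba, swapC_apply_a, if_neg hc,
          if_neg h2, if_neg hc]
      · rw [swapC_apply_other hja hjb, swapC_apply_other hja hjb,
          Equiv.swap_apply_self]

lemma UAGraph_adj_of {z : Fin n → Fin k → Fin n} {u v : Fin n}
    (h : (u : ℕ) < v) (hzv : ∃ i, z v i = u) : (UAGraph n k z).Adj u v := by
  rw [UAGraph, SimpleGraph.fromRel_adj]
  exact ⟨fun he => absurd h (by rw [he]; exact lt_irrefl _), Or.inl ⟨h, hzv⟩⟩

/-- Core adjacency transfer lemma. -/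
lemma swapC_adj {a b : Fin n} (hb : (b : ℕ) = (a : ℕ) + 1)
    {z : Fin n → Fin k → Fin n} (hz : ∀ j i, (z j i : ℕ) < max (j : ℕ) 1)
    {p q : Fin n} {i : Fin k} (hpq : (p : ℕ) < q) (hzq : z q i = p) :
    (UAGraph n k (swapC a b z)).Adj (Equiv.swap a b p) (Equiv.swap a b q)
      ∨ (q = a ∧ (UAGraph n k (swapC a b z)).Adj a b) := by
  have hba : b ≠ a := fun h => by rw [h] at hb; omega
  have hpval : (z q i : ℕ) = p := by rw [hzq]
  rcases lt_trichotomy (q : ℕ) (a : ℕ) with hqa | hqa | hqa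
  · -- q < a : everything fixed by the swap
    have hqna : q ≠ a := fun h => by rw [h] at hqa; omega
    have hqnb : q ≠ b := fun h => by rw [h] at hqa; omega
    have hpna : p ≠ a := fun h => by rw [h] at hpq; omega
    have hpnb : p ≠ b := fun h => by rw [h] at hpq; omega
    left
    rw [Equiv.swap_apply_of_ne_of_ne hpna hpnb,
      Equiv.swap_apply_of_ne_of_ne hqna hqnb]
    exact UAGraph_adj_of hpq ⟨i, by
      rw [swapC_apply_other hqna hqnb, hzq, Equiv.swap_apply_of_ne_of_ne hpna hpnb]⟩
  · -- q = a
    have hq : q = a := Fin.ext hqa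
    subst q
    have hpna : p ≠ a := fun h => by rw [h] at hpq; omega
    have hpnb : p ≠ b := fun h => by rw [h] at hpq; omega
    by_cases hcb : z b i = a
    · right
      refine ⟨rfl, UAGraph_adj_of (by omega) ⟨i, ?_⟩⟩
      rw [swapC_apply_b hba, if_pos hcb]
    · left
      rw [Equiv.swap_apply_of_ne_of_ne hpna hpnb, Equiv.swap_apply_left]
      refine UAGraph_adj_of (by omega) ⟨i, ?_⟩
      rw [swapC_apply_b hba, if_neg hcb, hzq]
  · -- q > a
    rcases eq_or_lt_of_le (show (b : ℕ) ≤ q by omega) with hqb | hqb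
    · -- q = b
      have hq : q = b := Fin.ext hqb.symm
      subst q
      by_cases hpa : p = a
      · subst hpa
        left
        rw [Equiv.swap_apply_left, Equiv.swap_apply_right]
        refine (UAGraph_adj_of (by omega) ⟨i, ?_⟩).symm
        rw [swapC_apply_b hba, if_pos hzq]
      · have hpnb : p ≠ b := fun h => by rw [h] at hpq; omega
        have hplta : (p : ℕ) < a := by
          have : (p : ℕ) ≠ a := fun h => hpa (Fin.ext h)
          omega
        left
        rw [Equiv.swap_apply_of_ne_of_ne hpa hpnb, Equiv.swap_apply_right]
        refine UAGraph_adj_of hplta ⟨i, ?_⟩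
        rw [swapC_apply_a, if_neg (by rw [hzq]; exact hpa), hzq]
    · -- q > b
      have hqna : q ≠ a := fun h => by rw [h] at hqb; omega
      have hqnb : q ≠ b := fun h => by rw [h] at hqb; omega
      left
      rw [Equiv.swap_apply_of_ne_of_ne hqna hqnb]
      have hlt : ((Equiv.swap a b p : Fin n) : ℕ) < q := by
        rw [Equiv.swap_apply_def]
        split_ifs <;> omega
      refine UAGraph_adj_of hlt ⟨i, ?_⟩
      rw [swapC_apply_other hqna hqnb, hzq]

/-- The key combinatorial step: the swap maps `N(Y)` into `N(X)` where
`Y = insert b (X.erase a)`. -/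
lemma step_nbhd {a b : Fin n} (hb : (b : ℕ) = (a : ℕ) + 1) {X : Finset (Fin n)}
    (haX : a ∈ X) (hbX : b ∉ X) {z : Fin n → Fin k → Fin n}
    (hz : ∀ j i, (z j i : ℕ) < max (j : ℕ) 1) :
    (extNbhd (UAGraph n k z) (insert b (X.erase a))).card
      ≤ (extNbhd (UAGraph n k (swapC a b z)) X).card := by
  have hab : a ≠ b := fun h => by rw [h] at hb; omega
  set Y : Finset (Fin n) := insert b (X.erase a) with hYdef
  have haY : a ∉ Y := by
    simp only [hYdef, Finset.mem_insert, Finset.mem_erase]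
    push_neg
    exact ⟨hab, fun h => absurd rfl h⟩
  have hYX : ∀ w, w ∈ Y → Equiv.swap a b w ∈ X := by
    intro w hw
    rcases Finset.mem_insert.mp hw with h | h
    · subst h; rw [Equiv.swap_apply_right]; exact haX
    · obtain ⟨hwa, hwX⟩ := Finset.mem_erase.mp h
      have hwb : w ≠ b := fun h => hbX (h ▸ hwX)
      rw [Equiv.swap_apply_of_ne_of_ne hwa hwb]; exact hwX
  have hXY : ∀ w, w ∈ X → Equiv.swap a b w ∈ Y := by
    intro w hw
    by_cases hwa : w = a
    · subst hwa; rw [Equiv.swap_apply_left]; exact Finset.mem_insert_self _ _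
    · have hwb : w ≠ b := fun h => hbX (h ▸ hw)
      rw [Equiv.swap_apply_of_ne_of_ne hwa hwb]
      exact Finset.mem_insert_of_mem (Finset.mem_erase.mpr ⟨hwa, hw⟩)
  apply Finset.card_le_card_of_injOn (fun u => Equiv.swap a b u)
  · intro u hu
    simp only [extNbhd, Finset.mem_coe, Finset.mem_filter, Finset.mem_univ, true_and] at hu ⊢
    obtain ⟨huY, y, hyY, hadj⟩ := hu
    constructor
    · intro hmem
      apply huY
      have := hXY _ hmem
      rwa [Equiv.swap_apply_self] at this
    · rw [UAGraph, SimpleGraph.fromRel_adj] at hadj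
      obtain ⟨hne, hR⟩ := hadj
      rcases hR with ⟨hlt, i, hzi⟩ | ⟨hlt, i, hzi⟩
      · -- y < u, z u i = y
        rcases swapC_adj hb hz hlt hzi with h | ⟨hqa, h⟩
        · exact ⟨Equiv.swap a b y, hYX y hyY, h⟩
        · refine ⟨a, haX, ?_⟩
          rw [hqa, Equiv.swap_apply_left]
          exact h
      · -- u < y, z y i = u
        rcases swapC_adj hb hz hlt hzi with h | ⟨hqa, h⟩
        · exact ⟨Equiv.swap a b y, hYX y hyY, h.symm⟩
        · exact absurd (hqa ▸ hyY) haY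
  · exact (Equiv.injective _).injOn

/-- Single-step probability comparison. -/
lemma step_prob {a b : Fin n} (hb : (b : ℕ) = (a : ℕ) + 1) {X : Finset (Fin n)}
    (haX : a ∈ X) (hbX : b ∉ X) (m : ℕ) :
    UAProb n k
        (fun z => m ≤ (extNbhd (UAGraph n k z) (insert b (X.erase a))).card)
      ≤ UAProb n k (fun z => m ≤ (extNbhd (UAGraph n k z) X).card) := by
  have hcard :
      ((UAValid n k).filter
          (fun z => m ≤ (extNbhd (UAGraph n k z) (insert b (X.erase a))).card)).card
        ≤ ((UAValid n k).filter
          (fun z => m ≤ (extNbhd (UAGraph n k z) X).card)).card := by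
    apply Finset.card_le_card_of_injOn (swapC a b)
    · intro z hzmem
      obtain ⟨hzv, hE⟩ := Finset.mem_filter.mp hzmem
      have hz := mem_UAValid.mp hzv
      refine Finset.mem_filter.mpr ⟨mem_UAValid.mpr (swapC_valid hb hz), ?_⟩
      exact le_trans hE (step_nbhd hb haX hbX hz)
    · intro z1 h1 z2 h2 heq
      have hz1 := mem_UAValid.mp (Finset.mem_filter.mp h1).1
      have hz2 := mem_UAValid.mp (Finset.mem_filter.mp h2).1
      calc z1 = swapC a b (swapC a b z1) := (swapC_swapC hb hz1).symm
        _ = swapC a b (swapC a b z2) := by rw [heq]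
        _ = z2 := swapC_swapC hb hz2
  rcases eq_or_ne (UAValid n k).card 0 with h0 | h0
  · unfold UAProb
    rw [h0]
    norm_num
  · have hpos : (0 : ℝ) < ((UAValid n k).card : ℝ) := by
      exact_mod_cast Nat.pos_of_ne_zero h0
    unfold UAProb
    refine (div_le_div_iff_of_pos_right hpos).mpr (Nat.cast_le.mpr ?_)
    convert hcard using 2 <;> congr!


lemma eq_of_emb_eq {ℓ : ℕ} {X Y : Finset (Fin n)} (hX : X.card = ℓ)
    (hY : Y.card = ℓ)
    (h : ∀ i, X.orderEmbOfFin hX i = Y.orderEmbOfFin hY i) : X = Y := by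
  apply Finset.coe_injective
  rw [← Finset.range_orderEmbOfFin X hX, ← Finset.range_orderEmbOfFin Y hY]
  have : ⇑(X.orderEmbOfFin hX) = ⇑(Y.orderEmbOfFin hY) := funext h
  rw [this]

lemma chain (ℓ t : ℕ) :
    ∀ (X Y : Finset (Fin n)) (hX : X.card = ℓ) (hY : Y.card = ℓ),
      (∀ i : Fin ℓ, ((X.orderEmbOfFin hX i : Fin n) : ℕ)
        ≤ ((Y.orderEmbOfFin hY i : Fin n) : ℕ)) →
      (∑ i : Fin ℓ, (((Y.orderEmbOfFin hY i : Fin n) : ℕ)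
        - ((X.orderEmbOfFin hX i : Fin n) : ℕ)) ≤ t) →
      ∀ m : ℕ,
        UAProb n k (fun z => m ≤ (extNbhd (UAGraph n k z) Y).card)
          ≤ UAProb n k (fun z => m ≤ (extNbhd (UAGraph n k z) X).card) := by
  induction t with
  | zero =>
    intro X Y hX hY hlex hsum m
    have hall : ∀ i : Fin ℓ, X.orderEmbOfFin hX i = Y.orderEmbOfFin hY i := by
      intro i
      have h1 := hlex i
      have h2 : ((Y.orderEmbOfFin hY i : Fin n) : ℕ)
          - ((X.orderEmbOfFin hX i : Fin n) : ℕ) = 0 := by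
        have := Finset.single_le_sum
          (f := fun i : Fin ℓ => ((Y.orderEmbOfFin hY i : Fin n) : ℕ)
            - ((X.orderEmbOfFin hX i : Fin n) : ℕ))
          (fun _ _ => Nat.zero_le _) (Finset.mem_univ i)
        have h3 : ((Y.orderEmbOfFin hY i : Fin n) : ℕ)
            - ((X.orderEmbOfFin hX i : Fin n) : ℕ) ≤ 0 := le_trans this hsum
        omega
      exact Fin.ext (by omega)
    rw [eq_of_emb_eq hX hY hall]
  | succ t ih =>
    intro X Y hX hY hlex hsum m
    by_cases hXY : ∀ i, X.orderEmbOfFin hX i = Y.orderEmbOfFin hY i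
    · rw [eq_of_emb_eq hX hY hXY]
    · push_neg at hXY
      obtain ⟨i₀, hi₀⟩ := hXY
      have hXm : StrictMono (X.orderEmbOfFin hX) := (X.orderEmbOfFin hX).strictMono
      have hYm : StrictMono (Y.orderEmbOfFin hY) := (Y.orderEmbOfFin hY).strictMono
      set S : Finset (Fin ℓ) := Finset.univ.filter
        (fun j => ((X.orderEmbOfFin hX j : Fin n) : ℕ)
          < ((Y.orderEmbOfFin hY j : Fin n) : ℕ)) with hSdef
      have hSne : S.Nonempty := by
        refine ⟨i₀, Finset.mem_filter.mpr ⟨Finset.mem_univ _, ?_⟩⟩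
        exact lt_of_le_of_ne (hlex i₀) (fun h => hi₀ (Fin.ext h))
      set i : Fin ℓ := S.max' hSne with hidef
      have hiS : i ∈ S := S.max'_mem hSne
      have hi : ((X.orderEmbOfFin hX i : Fin n) : ℕ)
          < ((Y.orderEmbOfFin hY i : Fin n) : ℕ) := (Finset.mem_filter.mp hiS).2
      have hmax : ∀ j, i < j → ((X.orderEmbOfFin hX j : Fin n) : ℕ)
          = ((Y.orderEmbOfFin hY j : Fin n) : ℕ) := by
        intro j hj
        by_contra hne
        have hjS : j ∈ S := Finset.mem_filter.mpr
          ⟨Finset.mem_univ _, lt_of_le_of_ne (hlex j) hne⟩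
        exact absurd (S.le_max' j hjS) (not_le.mpr hj)
      set a : Fin n := X.orderEmbOfFin hX i with hadef
      have hbn : (a : ℕ) + 1 < n := by
        have := (Y.orderEmbOfFin hY i).isLt
        omega
      set b : Fin n := ⟨(a : ℕ) + 1, hbn⟩ with hbdef
      have hbval : (b : ℕ) = (a : ℕ) + 1 := rfl
      have haX : a ∈ X := Finset.orderEmbOfFin_mem X hX i
      have hbX : b ∉ X := by
        intro hbin
        have hmem : b ∈ (↑X : Set (Fin n)) := hbin
        rw [← Finset.range_orderEmbOfFin X hX] at hmem
        obtain ⟨j, hj⟩ := hmem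
        have hjval : ((X.orderEmbOfFin hX j : Fin n) : ℕ) = (a : ℕ) + 1 := by
          rw [hj]
        have hij : i < j := by
          apply hXm.lt_iff_lt.mp
          rw [Fin.lt_def]
          omega
        have h1 := hmax j hij
        have h2 : ((Y.orderEmbOfFin hY i : Fin n) : ℕ)
            < ((Y.orderEmbOfFin hY j : Fin n) : ℕ) := Fin.lt_def.mp (hYm hij)
        omega
      set X' : Finset (Fin n) := insert b (X.erase a) with hX'def
      have hbe : b ∉ X.erase a := fun h => hbX (Finset.mem_erase.mp h).2
      have hl1 : 1 ≤ ℓ := by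
        rw [← hX]
        exact Finset.card_pos.mpr ⟨a, haX⟩
      have hX' : X'.card = ℓ := by
        rw [hX'def, Finset.card_insert_of_notMem hbe,
          Finset.card_erase_of_mem haX, hX]
        omega
      set f : Fin ℓ → Fin n :=
        (fun j => if j = i then b else X.orderEmbOfFin hX j) with hfdef
      have hfmem : ∀ j, f j ∈ X' := by
        intro j
        simp only [hfdef]
        by_cases hji : j = i
        · rw [if_pos hji]
          exact Finset.mem_insert_self _ _
        · rw [if_neg hji]
          refine Finset.mem_insert_of_mem (Finset.mem_erase.mpr ⟨?_, Finset.orderEmbOfFin_mem X hX j⟩)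
          intro h
          exact hji (hXm.injective (by rw [h]))
      have hfmono : StrictMono f := by
        intro j j' hjj
        simp only [hfdef]
        rw [Fin.lt_def]
        by_cases hj'i : j' = i
        · have hji : j ≠ i := by
            intro h
            rw [h, ← hj'i] at hjj
            exact lt_irrefl _ hjj
          rw [if_pos hj'i, if_neg hji]
          have : ((X.orderEmbOfFin hX j : Fin n) : ℕ)
              < ((X.orderEmbOfFin hX i : Fin n) : ℕ) :=
            Fin.lt_def.mp (hXm (hj'i ▸ hjj))
          simp only [hbdef]
          omega
        · by_cases hji : j = i
          · rw [if_pos hji, if_neg hj'i]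
            have h1 : ((X.orderEmbOfFin hX i : Fin n) : ℕ)
                < ((X.orderEmbOfFin hX j' : Fin n) : ℕ) :=
              Fin.lt_def.mp (hXm (hji ▸ hjj))
            have h2 : ((X.orderEmbOfFin hX j' : Fin n) : ℕ) ≠ (a : ℕ) + 1 := by
              intro h
              exact hbX (by
                have : X.orderEmbOfFin hX j' = b := Fin.ext h
                rw [← this]
                exact Finset.orderEmbOfFin_mem X hX j')
            simp only [hbdef]
            omega
          · rw [if_neg hji, if_neg hj'i]
            exact Fin.lt_def.mp (hXm hjj)
      have hf : ∀ j, X'.orderEmbOfFin hX' j = f j := by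
        have := Finset.orderEmbOfFin_unique hX' hfmem hfmono
        intro j
        rw [← this]
      have hlex2 : ∀ j : Fin ℓ, ((X'.orderEmbOfFin hX' j : Fin n) : ℕ)
          ≤ ((Y.orderEmbOfFin hY j : Fin n) : ℕ) := by
        intro j
        rw [hf j]
        simp only [hfdef]
        by_cases hji : j = i
        · rw [if_pos hji, hji]
          exact hi
        · rw [if_neg hji]
          exact hlex j
      have hkey : ∀ j : Fin ℓ,
          (((Y.orderEmbOfFin hY j : Fin n) : ℕ)
            - ((X'.orderEmbOfFin hX' j : Fin n) : ℕ))
          + (if j = i then 1 else 0)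
          = ((Y.orderEmbOfFin hY j : Fin n) : ℕ)
            - ((X.orderEmbOfFin hX j : Fin n) : ℕ) := by
        intro j
        rw [hf j]
        simp only [hfdef]
        by_cases hji : j = i
        · rw [if_pos hji, if_pos hji, hji]
          simp only [hbdef]
          omega
        · rw [if_neg hji, if_neg hji]
          omega
      have hsum' : ∑ j : Fin ℓ, (((Y.orderEmbOfFin hY j : Fin n) : ℕ)
          - ((X'.orderEmbOfFin hX' j : Fin n) : ℕ)) ≤ t := by
        have hone : ∑ j : Fin ℓ, (if j = i then 1 else 0) = 1 := by
          simp
        have hq : (∑ j : Fin ℓ, (((Y.orderEmbOfFin hY j : Fin n) : ℕ)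
            - ((X'.orderEmbOfFin hX' j : Fin n) : ℕ))) + 1
            = ∑ j : Fin ℓ, (((Y.orderEmbOfFin hY j : Fin n) : ℕ)
              - ((X.orderEmbOfFin hX j : Fin n) : ℕ)) := by
          rw [← hone, ← Finset.sum_add_distrib]
          exact Finset.sum_congr rfl (fun j _ => hkey j)
        omega
      calc UAProb n k (fun z => m ≤ (extNbhd (UAGraph n k z) Y).card)
          ≤ UAProb n k (fun z => m ≤ (extNbhd (UAGraph n k z) X').card) :=
            ih X' Y hX' hY hlex2 hsum' m
        _ ≤ UAProb n k (fun z => m ≤ (extNbhd (UAGraph n k z) X).card) := by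
            rw [hX'def]
            exact step_prob hbval haX hbX m

end Aux

/-- If `X ⪯ Y` in the componentwise (lexicographic) order on `ℓ`-subsets, then
`|N(X)|` stochastically dominates `|N(Y)|` in `G_{n,k}`. -/
theorem UA_stochastic_domination (n k ℓ : ℕ) (hl : 0 < ℓ)
    (X Y : Finset (Fin n)) (hX : X.card = ℓ) (hY : Y.card = ℓ)
    (hlex : ∀ i : Fin ℓ, ((X.orderIsoOfFin hX i : Fin n) : ℕ)
      ≤ ((Y.orderIsoOfFin hY i : Fin n) : ℕ)) :
    ∀ m : ℕ,
      UAProb n k (fun z => m ≤ (extNbhd (UAGraph n k z) Y).card)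
        ≤ UAProb n k (fun z => m ≤ (extNbhd (UAGraph n k z) X).card) := by
  intro m
  have hlex' : ∀ i : Fin ℓ, ((X.orderEmbOfFin hX i : Fin n) : ℕ)
      ≤ ((Y.orderEmbOfFin hY i : Fin n) : ℕ) := by
    intro i
    have := hlex i
    rwa [Finset.coe_orderIsoOfFin_apply, Finset.coe_orderIsoOfFin_apply] at this
  exact chain ℓ (∑ i : Fin ℓ, (((Y.orderEmbOfFin hY i : Fin n) : ℕ)
    - ((X.orderEmbOfFin hX i : Fin n) : ℕ))) X Y hX hY hlex' (le_refl _) m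
end

section
/- In the uniform attachment graph $G_{n,k}$, for any positive integers $\ell$ and $m$, the maximum over all $\ell$-subsets $X \subseteq [n]$ of the probability $\mathbb{P}(|N(X)| < m)$ is attained at $X = \{n-\ell+1, n-\ell+2, \dots, n\}$, the set of the $\ell$ largest vertices. -/
open Finset
open scoped Classical

/-- The set of the `ℓ` largest vertices `{n-ℓ+1, …, n}` (in `0`-indexed form,
the vertices `v` with `v ≥ n - ℓ`). -/
noncomputable def topSet (n ℓ : ℕ) : Finset (Fin n) :=
  Finset.univ.filter (fun v => n - ℓ ≤ (v : ℕ))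

section Aux

variable {n k : ℕ}

lemma UAValid_nonempty : (UAValid n k).Nonempty := by
  refine ⟨fun j _ => ⟨0, j.pos⟩, mem_UAValid.mpr ?_⟩
  intro j i
  exact lt_of_lt_of_le Nat.zero_lt_one (le_max_right _ _)

lemma lt_max_one_cases {x v : ℕ} (h : x < max v 1) : x < v ∨ (x = 0 ∧ v = 0) := by
  rcases Nat.le_total v 1 with h1 | h1
  · rw [Nat.max_eq_right h1] at h; omega
  · rw [Nat.max_eq_left h1] at h; omega

lemma mem_extNbhd {G : SimpleGraph (Fin n)} {X : Finset (Fin n)} {u : Fin n} :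
    u ∈ extNbhd G X ↔ u ∉ X ∧ ∃ x ∈ X, G.Adj x u := by
  simp [extNbhd]

lemma adj_of_choice {z : Fin n → Fin k → Fin n}
    (hz : ∀ j i, (z j i : ℕ) < max (j : ℕ) 1) {v w : Fin n} (i : Fin k)
    (h : z v i = w) (hvw : v ≠ w) : (UAGraph n k z).Adj v w := by
  have h1 := hz v i
  rw [h] at h1
  have hlt : (w : ℕ) < (v : ℕ) := by
    rcases lt_max_one_cases h1 with h2 | h2
    · exact h2
    · exact absurd (Fin.ext (by omega)) hvw
  unfold UAGraph
  rw [SimpleGraph.fromRel_adj]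
  exact ⟨hvw, Or.inr ⟨hlt, i, h⟩⟩

/-- The swap map: exchanges the roles of `a` and `b = a+1`. -/
noncomputable def PhiSwap (n k : ℕ) (a b : Fin n) (z : Fin n → Fin k → Fin n) :
    Fin n → Fin k → Fin n :=
  fun v i =>
    if v = a then (if z b i = a then z a i else z b i)
    else if v = b then (if z b i = a then a else z a i)
    else Equiv.swap a b (z v i)

variable {a b : Fin n}

lemma bne' (hab : (b : ℕ) = (a : ℕ) + 1) : b ≠ a := fun h => by
  rw [h] at hab; omega

lemma za_ne_a (hab : (b : ℕ) = (a : ℕ) + 1) {z : Fin n → Fin k → Fin n}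
    (hz : ∀ j i, (z j i : ℕ) < max (j : ℕ) 1) (i : Fin k) (h : z b i ≠ a) :
    z a i ≠ a := by
  intro hEq
  have h1 := hz a i
  rw [hEq] at h1
  rcases lt_max_one_cases h1 with h2 | h2
  · omega
  · have h3 := hz b i
    rw [Nat.max_eq_left (by omega : 1 ≤ (b : ℕ))] at h3
    exact h (Fin.ext (by omega))

lemma phiswap_valid (hab : (b : ℕ) = (a : ℕ) + 1) {z : Fin n → Fin k → Fin n}
    (hz : ∀ j i, (z j i : ℕ) < max (j : ℕ) 1) :
    ∀ v i, ((PhiSwap n k a b z v i : Fin n) : ℕ) < max (v : ℕ) 1 := by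
  intro v i
  unfold PhiSwap
  by_cases hva : v = a
  · subst hva
    rw [if_pos rfl]
    split
    · exact hz v i
    · rename_i h
      have h3 := hz b i
      rw [Nat.max_eq_left (by omega : 1 ≤ (b : ℕ))] at h3
      have hne : (z b i : ℕ) ≠ (v : ℕ) := fun hEq => h (Fin.ext hEq)
      have hlt : (z b i : ℕ) < (v : ℕ) := by omega
      exact lt_of_lt_of_le hlt (le_max_left _ _)
  · rw [if_neg hva]
    by_cases hvb : v = b
    · subst hvb
      rw [if_pos rfl]
      have hmax : max (v : ℕ) 1 = (v : ℕ) := Nat.max_eq_left (by omega)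
      rw [hmax]
      split
      · omega
      · have h3 := hz a i
        rcases lt_max_one_cases h3 with h2 | h2 <;> omega
    · rw [if_neg hvb]
      have hvaN : (v : ℕ) ≠ (a : ℕ) := fun hEq => hva (Fin.ext hEq)
      have hvbN : (v : ℕ) ≠ (b : ℕ) := fun hEq => hvb (Fin.ext hEq)
      have h3 := hz v i
      rcases Nat.lt_or_ge (v : ℕ) (b : ℕ) with hlt | hge
      · have hva' : (v : ℕ) < (a : ℕ) := by omega
        have hzlt : (z v i : ℕ) < (a : ℕ) := by
          rcases lt_max_one_cases h3 with h2 | h2 <;> omega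
        rw [Equiv.swap_apply_of_ne_of_ne
          (fun hEq => by rw [hEq] at hzlt; omega)
          (fun hEq => by rw [hEq] at hzlt; omega)]
        exact h3
      · have hvgt : (b : ℕ) < (v : ℕ) := by omega
        have hmax : max (v : ℕ) 1 = (v : ℕ) := Nat.max_eq_left (by omega)
        rw [hmax]
        rcases eq_or_ne (z v i) a with hEq | hNa
        · rw [hEq, Equiv.swap_apply_left]; omega
        · rcases eq_or_ne (z v i) b with hEq | hNb
          · rw [hEq, Equiv.swap_apply_right]; omega
          · rw [Equiv.swap_apply_of_ne_of_ne hNa hNb]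
            rw [hmax] at h3; exact h3

lemma phiswap_a {z : Fin n → Fin k → Fin n} (i : Fin k) :
    PhiSwap n k a b z a i = if z b i = a then z a i else z b i := by
  simp [PhiSwap]

lemma phiswap_b (hba : b ≠ a) {z : Fin n → Fin k → Fin n} (i : Fin k) :
    PhiSwap n k a b z b i = if z b i = a then a else z a i := by
  simp [PhiSwap, if_neg hba]

lemma phiswap_other {v : Fin n} (hva : v ≠ a) (hvb : v ≠ b)
    {z : Fin n → Fin k → Fin n} (i : Fin k) :
    PhiSwap n k a b z v i = Equiv.swap a b (z v i) := by
  simp [PhiSwap, if_neg hva, if_neg hvb]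

lemma phiswap_invol (hab : (b : ℕ) = (a : ℕ) + 1) {z : Fin n → Fin k → Fin n}
    (hz : ∀ j i, (z j i : ℕ) < max (j : ℕ) 1) :
    PhiSwap n k a b (PhiSwap n k a b z) = z := by
  have hba : b ≠ a := bne' hab
  funext v i
  have hPb : PhiSwap n k a b z b i = if z b i = a then a else z a i := by
    simp [PhiSwap, if_neg hba]
  have hPa : PhiSwap n k a b z a i = if z b i = a then z a i else z b i := by
    simp [PhiSwap]
  show (if v = a then _ else if v = b then _ else _) = z v i
  by_cases hva : v = a
  · rw [if_pos hva, hPb, hPa, hva]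
    by_cases h : z b i = a
    · simp [h]
    · simp only [if_neg h, if_neg (za_ne_a hab hz i h)]
  · rw [if_neg hva]
    by_cases hvb : v = b
    · rw [if_pos hvb, hPb, hPa, hvb]
      by_cases h : z b i = a
      · simp [h]
      · simp only [if_neg h, if_neg (za_ne_a hab hz i h)]
    · rw [if_neg hvb]
      show Equiv.swap a b (PhiSwap n k a b z v i) = z v i
      rw [PhiSwap]
      simp only [if_neg hva, if_neg hvb]
      exact Equiv.swap_apply_self _ _ _

lemma phiswap_core (hab : (b : ℕ) = (a : ℕ) + 1) {z : Fin n → Fin k → Fin n}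
    (hz : ∀ j i, (z j i : ℕ) < max (j : ℕ) 1) {v w : Fin n} {i : Fin k}
    (h : PhiSwap n k a b z v i = w) (hvw : v ≠ w) :
    (UAGraph n k z).Adj (Equiv.swap a b v) (Equiv.swap a b w) ∨
      (v = a ∧ (UAGraph n k z).Adj a b ∧ (UAGraph n k z).Adj a w) := by
  have hba : b ≠ a := bne' hab
  by_cases hva : v = a
  · rw [hva] at h hvw
    rw [hva]
    rw [phiswap_a] at h
    by_cases hc : z b i = a
    · rw [if_pos hc] at h
      exact Or.inr ⟨rfl, (adj_of_choice hz i hc hba).symm, adj_of_choice hz i h hvw⟩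
    · rw [if_neg hc] at h
      have hwa : w ≠ a := fun hEq => hc (hEq ▸ h)
      have hwb : w ≠ b := by
        intro hEq
        have h3 := hz b i
        rw [h, hEq] at h3
        rw [Nat.max_eq_left (by omega : 1 ≤ (b : ℕ))] at h3
        omega
      rw [Equiv.swap_apply_left, Equiv.swap_apply_of_ne_of_ne hwa hwb]
      exact Or.inl (adj_of_choice hz i h (fun hEq => hwb hEq.symm))
  · by_cases hvb : v = b
    · rw [hvb] at h hvw
      rw [hvb]
      rw [phiswap_b hba] at h
      by_cases hc : z b i = a
      · rw [if_pos hc] at h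
        rw [← h, Equiv.swap_apply_right, Equiv.swap_apply_left]
        exact Or.inl (adj_of_choice hz i hc hba).symm
      · rw [if_neg hc] at h
        have hwa : w ≠ a := h ▸ za_ne_a hab hz i hc
        have hwb : w ≠ b := by
          intro hEq
          have h3 := hz a i
          rw [h, hEq] at h3
          rcases lt_max_one_cases h3 with h2 | h2 <;> omega
        rw [Equiv.swap_apply_right, Equiv.swap_apply_of_ne_of_ne hwa hwb]
        exact Or.inl (adj_of_choice hz i h (fun hEq => hwa hEq.symm))
    · rw [phiswap_other hva hvb] at h
      have hzvi : z v i = Equiv.swap a b w := by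
        have h2 := congrArg (Equiv.swap a b) h
        rwa [Equiv.swap_apply_self] at h2
      rw [Equiv.swap_apply_of_ne_of_ne hva hvb]
      refine Or.inl (adj_of_choice hz i hzvi ?_)
      intro hEq
      apply hvw
      have h2 := congrArg (Equiv.swap a b) hEq
      rw [Equiv.swap_apply_self] at h2
      rw [← h2]
      exact (Equiv.swap_apply_of_ne_of_ne hva hvb).symm

lemma phiswap_nbhd (hab : (b : ℕ) = (a : ℕ) + 1) {X : Finset (Fin n)}
    (ha : a ∈ X) (hb : b ∉ X) {z : Fin n → Fin k → Fin n}
    (hz : ∀ j i, (z j i : ℕ) < max (j : ℕ) 1) :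
    extNbhd (UAGraph n k (PhiSwap n k a b z)) (X.image (Equiv.swap a b)) ⊆
      (extNbhd (UAGraph n k z) X).image (Equiv.swap a b) := by
  intro u hu
  rw [mem_extNbhd] at hu
  obtain ⟨huX, x, hx, hadj⟩ := hu
  have hτu : Equiv.swap a b u ∉ X := by
    intro hmem
    exact huX (by
      rw [Finset.mem_image]
      exact ⟨_, hmem, Equiv.swap_apply_self _ _ _⟩)
  have hτx : Equiv.swap a b x ∈ X := by
    rw [Finset.mem_image] at hx
    obtain ⟨y, hy, hyx⟩ := hx
    have : Equiv.swap a b x = y := by rw [← hyx, Equiv.swap_apply_self]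
    rwa [this]
  rw [Finset.mem_image]
  refine ⟨Equiv.swap a b u, ?_, Equiv.swap_apply_self _ _ _⟩
  rw [mem_extNbhd]
  refine ⟨hτu, ?_⟩
  rw [UAGraph, SimpleGraph.fromRel_adj] at hadj
  obtain ⟨hxu, hor⟩ := hadj
  rcases hor with ⟨_, i, hch⟩ | ⟨_, i, hch⟩
  · -- PhiSwap z u i = x
    rcases phiswap_core hab hz hch (by exact fun hEq => hxu hEq.symm) with hAdj | ⟨hua, hAdjab, _⟩
    · exact ⟨Equiv.swap a b x, hτx, hAdj.symm⟩
    · refine ⟨a, ha, ?_⟩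
      rw [hua, Equiv.swap_apply_left]
      exact hAdjab
  · -- PhiSwap z x i = u
    rcases phiswap_core hab hz hch hxu with hAdj | ⟨hxa, _, _⟩
    · exact ⟨Equiv.swap a b x, hτx, hAdj⟩
    · exfalso
      apply hb
      have : Equiv.swap a b x = b := by rw [hxa, Equiv.swap_apply_left]
      rwa [this] at hτx

lemma UA_step (m : ℕ) (hab : (b : ℕ) = (a : ℕ) + 1) (X : Finset (Fin n))
    (ha : a ∈ X) (hb : b ∉ X) :
    UAProb n k (fun z => (extNbhd (UAGraph n k z) X).card < m) ≤
      UAProb n k (fun z =>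
        (extNbhd (UAGraph n k z) (X.image (Equiv.swap a b))).card < m) := by
  have hle : ((UAValid n k).filter fun z => (extNbhd (UAGraph n k z) X).card < m).card ≤
      ((UAValid n k).filter fun z =>
        (extNbhd (UAGraph n k z) (X.image (Equiv.swap a b))).card < m).card := by
    apply Finset.card_le_card_of_injOn (PhiSwap n k a b)
    · intro z hzmem
      rw [Finset.mem_coe, Finset.mem_filter] at hzmem
      obtain ⟨hzv, hzE⟩ := hzmem
      rw [mem_UAValid] at hzv
      rw [Finset.mem_coe]
      refine Finset.mem_filter.mpr ⟨mem_UAValid.mpr (phiswap_valid hab hzv), ?_⟩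
      calc (extNbhd (UAGraph n k (PhiSwap n k a b z)) (X.image (Equiv.swap a b))).card
          ≤ ((extNbhd (UAGraph n k z) X).image (Equiv.swap a b)).card :=
            Finset.card_le_card (phiswap_nbhd hab ha hb hzv)
        _ ≤ (extNbhd (UAGraph n k z) X).card := Finset.card_image_le
        _ < m := hzE
    · intro z1 h1 z2 h2 hEq
      simp only [Finset.coe_filter, Set.mem_setOf_eq] at h1 h2
      have hv1 := mem_UAValid.mp h1.1
      have hv2 := mem_UAValid.mp h2.1
      calc z1 = PhiSwap n k a b (PhiSwap n k a b z1) := (phiswap_invol hab hv1).symm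
        _ = PhiSwap n k a b (PhiSwap n k a b z2) := by rw [hEq]
        _ = z2 := phiswap_invol hab hv2
  unfold UAProb
  rw [div_eq_mul_inv, div_eq_mul_inv]
  refine mul_le_mul_of_nonneg_right (Nat.cast_le.mpr ?_) (by positivity)
  rw [Finset.filter_congr_decidable]
  conv_rhs => rw [Finset.filter_congr_decidable]
  exact hle

lemma card_filter_le (c : ℕ) (hc : c ≤ n) :
    (Finset.univ.filter fun v : Fin n => c ≤ (v : ℕ)).card = n - c := by
  rw [← Finset.card_range (n - c)]
  refine Finset.card_bij' (fun v _ => (v : ℕ) - c)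
    (fun j hj => (⟨c + j, by
      rw [Finset.mem_range] at hj; omega⟩ : Fin n)) ?_ ?_ ?_ ?_
  · intro v hv
    rw [Finset.mem_filter] at hv
    simp only [Finset.mem_range]
    show (v : ℕ) - c < n - c
    have h1 := v.isLt
    have h2 := hv.2
    omega
  · intro j hj
    rw [Finset.mem_range] at hj
    simp only [Finset.mem_filter]
    refine ⟨Finset.mem_univ _, ?_⟩
    show c ≤ c + j
    omega
  · intro v hv
    rw [Finset.mem_filter] at hv
    apply Fin.ext
    show c + ((v : ℕ) - c) = (v : ℕ)
    have h2 := hv.2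
    omega
  · intro j hj
    rw [Finset.mem_range] at hj
    show (c + j) - c = j
    omega

end Aux

/-- Among all `ℓ`-subsets `X` of the vertex set, the probability
`ℙ(|N(X)| < m)` is maximized by the set of the `ℓ` largest vertices. -/
theorem UA_worst_set (n k ℓ m : ℕ) (hl : 0 < ℓ) (hm : 0 < m) (hln : ℓ ≤ n)
    (X : Finset (Fin n)) (hX : X.card = ℓ) :
    UAProb n k (fun z => (extNbhd (UAGraph n k z) X).card < m)
      ≤ UAProb n k (fun z => (extNbhd (UAGraph n k z) (topSet n ℓ)).card < m) := by
  have hn : 0 < n := lt_of_lt_of_le hl hln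
  have hcard_top : (topSet n ℓ).card = ℓ := by
    show (Finset.univ.filter fun v : Fin n => n - ℓ ≤ (v : ℕ)).card = ℓ
    rw [card_filter_le (n - ℓ) (Nat.sub_le _ _)]
    omega
  suffices H : ∀ d (X : Finset (Fin n)), X.card = ℓ →
      (∑ x ∈ X, (n - 1 - (x : ℕ))) = d →
      UAProb n k (fun z => (extNbhd (UAGraph n k z) X).card < m)
        ≤ UAProb n k (fun z => (extNbhd (UAGraph n k z) (topSet n ℓ)).card < m) by
    exact H _ X hX rfl
  intro d
  induction d using Nat.strong_induction_on with
  | _ d ih =>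
  intro X hXc hXd
  by_cases hTop : X = topSet n ℓ
  · rw [hTop]
  · have hex : ∃ a ∈ X, ∃ hlt : (a : ℕ) + 1 < n, (⟨(a : ℕ) + 1, hlt⟩ : Fin n) ∉ X := by
      by_contra hno
      push_neg at hno
      apply hTop
      apply Finset.eq_of_subset_of_card_le ?_ (by rw [hcard_top, hXc])
      intro x hx
      have hup : ∀ j, (x : ℕ) ≤ j → ∀ hj : j < n, (⟨j, hj⟩ : Fin n) ∈ X := by
        intro j hj
        induction j, hj using Nat.le_induction with
        | base =>
          intro hj
          have : (⟨(x : ℕ), hj⟩ : Fin n) = x := Fin.ext rfl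
          rwa [this]
        | succ j hle ihj =>
          intro hj1
          have hjn : j < n := by omega
          exact hno ⟨j, hjn⟩ (ihj hjn) hj1
      have hIsub : (Finset.univ.filter fun v : Fin n => (x : ℕ) ≤ (v : ℕ)) ⊆ X := by
        intro v hv
        rw [Finset.mem_filter] at hv
        have h1 := hup (v : ℕ) hv.2 v.isLt
        have h2 : (⟨(v : ℕ), v.isLt⟩ : Fin n) = v := Fin.ext rfl
        rwa [h2] at h1
      have hcle : n - (x : ℕ) ≤ ℓ := by
        have h3 := Finset.card_le_card hIsub
        rw [card_filter_le (x : ℕ) (le_of_lt x.isLt), hXc] at h3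
        exact h3
      show x ∈ Finset.univ.filter fun v : Fin n => n - ℓ ≤ (v : ℕ)
      rw [Finset.mem_filter]
      refine ⟨Finset.mem_univ _, ?_⟩
      omega
    obtain ⟨a, ha, hlt, hbnot⟩ := hex
    set b : Fin n := ⟨(a : ℕ) + 1, hlt⟩ with hbdef
    have hab : (b : ℕ) = (a : ℕ) + 1 := rfl
    have himg : X.image (Equiv.swap a b) = insert b (X.erase a) := by
      ext v
      simp only [Finset.mem_image, Finset.mem_insert, Finset.mem_erase]
      constructor
      · rintro ⟨x, hx, rfl⟩
        rcases eq_or_ne x a with hxa | hxa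
        · rw [hxa, Equiv.swap_apply_left]
          exact Or.inl rfl
        · rcases eq_or_ne x b with hxb | hxb
          · rw [hxb] at hx; exact absurd hx hbnot
          · rw [Equiv.swap_apply_of_ne_of_ne hxa hxb]
            exact Or.inr ⟨hxa, hx⟩
      · rintro (rfl | ⟨hva, hv⟩)
        · exact ⟨a, ha, Equiv.swap_apply_left a b⟩
        · exact ⟨v, hv, Equiv.swap_apply_of_ne_of_ne hva (fun hEq => hbnot (hEq ▸ hv))⟩
    have hcard' : (X.image (Equiv.swap a b)).card = ℓ := by
      rw [Finset.card_image_of_injective _ (Equiv.swap a b).injective, hXc]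
    have hsum : (∑ x ∈ X.image (Equiv.swap a b), (n - 1 - (x : ℕ))) < d := by
      rw [himg, Finset.sum_insert (fun hmem => hbnot (Finset.mem_of_mem_erase hmem))]
      have h4 : (n - 1 - (a : ℕ)) + ∑ x ∈ X.erase a, (n - 1 - (x : ℕ)) =
          ∑ x ∈ X, (n - 1 - (x : ℕ)) :=
        Finset.add_sum_erase X (fun x : Fin n => n - 1 - (x : ℕ)) ha
      rw [hXd] at h4
      have hba : (n - 1 - (b : ℕ)) < (n - 1 - (a : ℕ)) := by
        rw [hab]; omega
      omega
    calc UAProb n k (fun z => (extNbhd (UAGraph n k z) X).card < m)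
        ≤ UAProb n k (fun z =>
            (extNbhd (UAGraph n k z) (X.image (Equiv.swap a b))).card < m) :=
          UA_step m hab X ha hbnot
      _ ≤ _ := ih _ hsum _ hcard' rfl
end

section
/- Let $H(x) = -x\log_2 x - (1-x)\log_2(1-x)$ be the binary entropy function and let $k \ge 3$ be an integer. Then the function $f(x) = 2(k+1)x + H(2x) - kH(x)$ has a unique zero in the open interval $(0, 1/2)$. -/
open Real

/-- The binary entropy function `H(x) = -x log₂ x - (1-x)log₂ (1-x)`
(with the conventions `H 0 = H 1 = 0` coming from `logb 2 0 = 0`). -/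
noncomputable def binEnt (x : ℝ) : ℝ :=
  -x * Real.logb 2 x - (1 - x) * Real.logb 2 (1 - x)

open Set

lemma binEnt_eq (x : ℝ) :
    binEnt x = (-(x * Real.log x) - (1 - x) * Real.log (1 - x)) / Real.log 2 := by
  unfold binEnt Real.logb; ring

lemma log2_pos : 0 < Real.log 2 := Real.log_pos (by norm_num)

lemma continuous_binEnt : Continuous binEnt := by
  have h1 : Continuous fun x : ℝ => x * Real.log x := Real.continuous_mul_log
  have h2 : Continuous fun x : ℝ => (1 - x) * Real.log (1 - x) :=
    h1.comp (continuous_const.sub continuous_id)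
  have h : Continuous fun x : ℝ => (-(x * Real.log x) - (1 - x) * Real.log (1 - x)) / Real.log 2 :=
    (h1.neg.sub h2).div_const _
  simpa [← binEnt_eq] using h

lemma binEnt_zero : binEnt 0 = 0 := by simp [binEnt]

lemma binEnt_one : binEnt 1 = 0 := by simp [binEnt]

lemma binEnt_half : binEnt (1/2) = 1 := by
  have h : Real.logb 2 (1/2) = -1 := by
    rw [one_div, Real.logb_inv, Real.logb_self_eq_one] <;> norm_num
  unfold binEnt; rw [show (1:ℝ) - 1/2 = 1/2 by norm_num, h]; ring

lemma binEnt_hasDerivAt {y : ℝ} (h0 : 0 < y) (h1 : y < 1) :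
    HasDerivAt binEnt ((Real.log (1 - y) - Real.log y) / Real.log 2) y := by
  have hy : y ≠ 0 := h0.ne'
  have hy1 : (1 : ℝ) - y ≠ 0 := by linarith
  have d1 : HasDerivAt (fun x : ℝ => x * Real.log x) (Real.log y + 1) y :=
    Real.hasDerivAt_mul_log hy
  have d2 : HasDerivAt (fun x : ℝ => (1 - x) * Real.log (1 - x))
      ((Real.log (1 - y) + 1) * (-1)) y :=
    (Real.hasDerivAt_mul_log hy1).comp y ((hasDerivAt_id y).const_sub 1)
  have d3 := ((d1.neg.sub d2).div_const (Real.log 2))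
  have h : HasDerivAt (fun x : ℝ => (-(x * Real.log x) - (1 - x) * Real.log (1 - x)) / Real.log 2)
      ((Real.log (1 - y) - Real.log y) / Real.log 2) y := by
    convert d3 using 1; rfl; rfl; rfl; ring
  exact h.congr_of_eventuallyEq (Filter.Eventually.of_forall fun x => binEnt_eq x)

/-- The function whose unique zero we study, with real parameter `K`. -/
noncomputable def fK (K : ℝ) (x : ℝ) : ℝ := 2 * (K + 1) * x + binEnt (2 * x) - K * binEnt x

/-- The derivative of `fK K`. -/
noncomputable def pK (K : ℝ) (x : ℝ) : ℝ :=
  2 * (K + 1) + 2 * ((Real.log (1 - 2 * x) - Real.log (2 * x)) / Real.log 2)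
    - K * ((Real.log (1 - x) - Real.log x) / Real.log 2)

lemma continuous_fK (K : ℝ) : Continuous (fK K) := by
  unfold fK
  exact ((continuous_const.mul continuous_id).add
    (continuous_binEnt.comp (continuous_const.mul continuous_id))).sub
    (continuous_const.mul continuous_binEnt)

lemma fK_zero (K : ℝ) : fK K 0 = 0 := by simp [fK, binEnt_zero]

lemma fK_half (K : ℝ) : fK K (1/2) = 1 := by
  unfold fK
  rw [show (2:ℝ) * (1/2) = 1 by norm_num, binEnt_one, binEnt_half]
  ring

lemma fK_hasDerivAt (K : ℝ) {x : ℝ} (h0 : 0 < x) (h1 : x < 1/2) :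
    HasDerivAt (fK K) (pK K x) x := by
  have h2x : HasDerivAt (fun x : ℝ => binEnt (2 * x))
      (((Real.log (1 - 2 * x) - Real.log (2 * x)) / Real.log 2) * 2) x :=
    (binEnt_hasDerivAt (by linarith) (by linarith)).comp x
      (by simpa using (hasDerivAt_id x).const_mul (2:ℝ))
  have hx : HasDerivAt binEnt ((Real.log (1 - x) - Real.log x) / Real.log 2) x :=
    binEnt_hasDerivAt h0 (by linarith)
  have hl : HasDerivAt (fun x : ℝ => 2 * (K + 1) * x) (2 * (K + 1)) x := by
    simpa using (hasDerivAt_id x).const_mul (2 * (K + 1))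
  have h := (hl.add h2x).sub (hx.const_mul K)
  convert h using 1; rfl; rfl; rfl
  unfold pK; ring

lemma pK_hasDerivAt (K : ℝ) {x : ℝ} (h0 : 0 < x) (h1 : x < 1/2) :
    HasDerivAt (pK K)
      (((K - 2) - (2 * K - 2) * x) / (x * (1 - x) * (1 - 2 * x) * Real.log 2)) x := by
  have hx : x ≠ 0 := h0.ne'
  have h1x : (1 : ℝ) - x ≠ 0 := by linarith
  have h2x : (2 : ℝ) * x ≠ 0 := by positivity
  have h12x : (1 : ℝ) - 2 * x ≠ 0 := by linarith
  have hlog2 : Real.log 2 ≠ 0 := log2_pos.ne'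
  have d1 : HasDerivAt (fun x : ℝ => Real.log (1 - 2 * x)) ((1 - 2 * x)⁻¹ * (-2)) x :=
    (Real.hasDerivAt_log h12x).comp x (h := fun x => 1 - 2 * x)
      (by simpa using ((hasDerivAt_id x).const_mul (2:ℝ)).const_sub 1)
  have d2 : HasDerivAt (fun x : ℝ => Real.log (2 * x)) ((2 * x)⁻¹ * 2) x :=
    (Real.hasDerivAt_log h2x).comp x (by simpa using (hasDerivAt_id x).const_mul (2:ℝ))
  have d3 : HasDerivAt (fun x : ℝ => Real.log (1 - x)) ((1 - x)⁻¹ * (-1)) x :=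
    (Real.hasDerivAt_log h1x).comp x ((hasDerivAt_id x).const_sub 1)
  have d4 : HasDerivAt (fun x : ℝ => Real.log x) x⁻¹ x := Real.hasDerivAt_log hx
  have h := ((hasDerivAt_const x (2*(K+1))).add
      (((d1.sub d2).div_const (Real.log 2)).const_mul 2)).sub
      (((d3.sub d4).div_const (Real.log 2)).const_mul K)
  convert h using 1; rfl; rfl; rfl
  field_simp
  ring

lemma binEnt_sixteenth : binEnt (1/16) * Real.log 2 = 4 * Real.log 2 - (15/16) * Real.log 15 := by
  rw [binEnt_eq]
  have h16 : Real.log (1/16 : ℝ) = -(4 * Real.log 2) := by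
    rw [one_div, Real.log_inv, show (16:ℝ) = 2^4 by norm_num, Real.log_pow]; push_cast; ring
  have h1516 : Real.log (15/16 : ℝ) = Real.log 15 - 4 * Real.log 2 := by
    rw [Real.log_div (by norm_num) (by norm_num), show (16:ℝ) = 2^4 by norm_num, Real.log_pow]
    push_cast; ring
  rw [show (1:ℝ) - 1/16 = 15/16 by norm_num, h16, h1516]
  field_simp
  ring

lemma binEnt_thirtysecond :
    binEnt (1/32) * Real.log 2 = 5 * Real.log 2 - (31/32) * Real.log 31 := by
  rw [binEnt_eq]
  have h32 : Real.log (1/32 : ℝ) = -(5 * Real.log 2) := by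
    rw [one_div, Real.log_inv, show (32:ℝ) = 2^5 by norm_num, Real.log_pow]; push_cast; ring
  have h3132 : Real.log (31/32 : ℝ) = Real.log 31 - 5 * Real.log 2 := by
    rw [Real.log_div (by norm_num) (by norm_num), show (32:ℝ) = 2^5 by norm_num, Real.log_pow]
    push_cast; ring
  rw [show (1:ℝ) - 1/32 = 31/32 by norm_num, h32, h3132]
  field_simp
  ring

lemma fK_neg_at (K : ℝ) (hK : 3 ≤ K) : fK K (1/32) < 0 := by
  have h2 := log2_pos
  have hB : 31 * Real.log 31 < 158 * Real.log 2 := by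
    have h := Real.log_lt_log (by positivity) (by norm_num : (31:ℝ)^31 < 2^158)
    rwa [Real.log_pow, Real.log_pow] at h
  have hA : 93 * Real.log 31 < 344 * Real.log 2 + 30 * Real.log 15 := by
    have h := Real.log_lt_log (by positivity) (by rw [show (344:ℕ) = 172 * 2 from rfl, pow_mul]; norm_num : (31:ℝ)^93 < 2^344 * 15^30)
    rwa [Real.log_pow, Real.log_mul (by positivity) (by positivity), Real.log_pow,
      Real.log_pow] at h
  have hstep : fK K (1/32) * Real.log 2 =
      2 * (K + 1) * (1/32) * Real.log 2 + (binEnt (1/16) * Real.log 2)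
        - K * (binEnt (1/32) * Real.log 2) := by
    unfold fK; rw [show (2:ℝ) * (1/32) = 1/16 by norm_num]; ring
  rw [binEnt_sixteenth, binEnt_thirtysecond] at hstep
  have hKc : K * (31 * Real.log 31 - 158 * Real.log 2)
      ≤ 3 * (31 * Real.log 31 - 158 * Real.log 2) := by nlinarith
  have hneg : fK K (1/32) * Real.log 2 < 0 := by nlinarith
  by_contra h
  push_neg at h
  nlinarith [mul_nonneg h h2.le]

lemma pK_strictMonoOn (K : ℝ) (hK : 3 ≤ K) :
    StrictMonoOn (pK K) (Ioc 0 ((K - 2) / (2 * K - 2))) := by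
  set xs := (K - 2) / (2 * K - 2) with hxs
  have hden : 0 < 2 * K - 2 := by linarith
  have hxs2 : xs < 1/2 := by rw [hxs, div_lt_iff₀ hden]; linarith
  apply strictMonoOn_of_deriv_pos (convex_Ioc _ _)
  · intro x hx
    exact (pK_hasDerivAt K hx.1 (lt_of_le_of_lt hx.2 hxs2)).continuousAt.continuousWithinAt
  · intro x hx
    rw [interior_Ioc] at hx
    have h0 : 0 < x := hx.1
    have h1 : x < 1/2 := hx.2.trans hxs2
    rw [(pK_hasDerivAt K h0 h1).deriv]
    have hnum : 0 < (K - 2) - (2 * K - 2) * x := by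
      have := (lt_div_iff₀ hden).mp hx.2
      linarith
    have hdenom : 0 < x * (1 - x) * (1 - 2 * x) * Real.log 2 := by
      have := log2_pos
      have h1x : 0 < 1 - x := by linarith
      have h12x : 0 < 1 - 2 * x := by linarith
      positivity
    exact div_pos hnum hdenom

lemma pK_strictAntiOn (K : ℝ) (hK : 3 ≤ K) :
    StrictAntiOn (pK K) (Ico ((K - 2) / (2 * K - 2)) (1/2)) := by
  set xs := (K - 2) / (2 * K - 2) with hxs
  have hden : 0 < 2 * K - 2 := by linarith
  have hxs0 : 0 < xs := div_pos (by linarith) hden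
  apply strictAntiOn_of_deriv_neg (convex_Ico _ _)
  · intro x hx
    exact (pK_hasDerivAt K (hxs0.trans_le hx.1) hx.2).continuousAt.continuousWithinAt
  · intro x hx
    rw [interior_Ico] at hx
    have h0 : 0 < x := hxs0.trans hx.1
    have h1 : x < 1/2 := hx.2
    rw [(pK_hasDerivAt K h0 h1).deriv]
    have hnum : (K - 2) - (2 * K - 2) * x < 0 := by
      have := (div_lt_iff₀ hden).mp hx.1
      linarith
    have hdenom : 0 < x * (1 - x) * (1 - 2 * x) * Real.log 2 := by
      have := log2_pos
      have h1x : 0 < 1 - x := by linarith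
      have h12x : 0 < 1 - 2 * x := by linarith
      positivity
    exact div_neg_of_neg_of_pos hnum hdenom

lemma no_two_zeros (K : ℝ) (hK : 3 ≤ K) {a b : ℝ} (ha : a ∈ Ioo (0:ℝ) (1/2))
    (hb : b ∈ Ioo (0:ℝ) (1/2)) (hab : a < b) (hfa : fK K a = 0) (hfb : fK K b = 0) : False := by
  set xs := (K - 2) / (2 * K - 2) with hxs
  have hcont := (continuous_fK K).continuousOn (s := univ)
  -- Rolle on [0, a]
  obtain ⟨c₁, hc₁, hpc₁⟩ := exists_hasDerivAt_eq_slope (fK K) (pK K) ha.1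
    ((continuous_fK K).continuousOn)
    (fun x hx => fK_hasDerivAt K hx.1 (hx.2.trans ha.2))
  rw [hfa, fK_zero] at hpc₁
  simp only [sub_zero, zero_div] at hpc₁
  -- Rolle on [a, b]
  obtain ⟨c₂, hc₂, hpc₂⟩ := exists_hasDerivAt_eq_slope (fK K) (pK K) hab
    ((continuous_fK K).continuousOn)
    (fun x hx => fK_hasDerivAt K (ha.1.trans hx.1) (hx.2.trans hb.2))
  rw [hfa, hfb] at hpc₂
  simp only [sub_zero, zero_div] at hpc₂
  -- MVT on [b, 1/2]
  obtain ⟨c₃, hc₃, hpc₃⟩ := exists_hasDerivAt_eq_slope (fK K) (pK K) hb.2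
    ((continuous_fK K).continuousOn)
    (fun x hx => fK_hasDerivAt K (hb.1.trans hx.1) hx.2)
  rw [hfb, fK_half] at hpc₃
  have hpc₃pos : 0 < pK K c₃ := by
    rw [hpc₃]
    have : 0 < 1/2 - b := by linarith [hb.2]
    positivity
  rcases le_or_gt c₂ xs with hle | hlt
  · -- both c₁ < c₂ in (0, xs]
    have h1 : c₁ ∈ Ioc (0:ℝ) xs := ⟨hc₁.1, le_of_lt (lt_of_lt_of_le (hc₁.2.trans hc₂.1) hle)⟩
    have h2 : c₂ ∈ Ioc (0:ℝ) xs := ⟨ha.1.trans hc₂.1, hle⟩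
    have := pK_strictMonoOn K hK h1 h2 (hc₁.2.trans hc₂.1)
    rw [hpc₁, hpc₂] at this
    exact lt_irrefl 0 this
  · -- c₂ < c₃ in [xs, 1/2)
    have h2 : c₂ ∈ Ico xs (1/2) := ⟨hlt.le, hc₂.2.trans hb.2⟩
    have h3 : c₃ ∈ Ico xs (1/2) := ⟨(hlt.trans (hc₂.2.trans hc₃.1)).le, hc₃.2⟩
    have := pK_strictAntiOn K hK h2 h3 (hc₂.2.trans hc₃.1)
    rw [hpc₂] at this
    exact absurd hpc₃pos (by linarith)

lemma main_aux (K : ℝ) (hK : 3 ≤ K) :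
    ∃! x : ℝ, x ∈ Ioo (0:ℝ) (1/2) ∧ fK K x = 0 := by
  -- existence via IVT on [1/32, 1/2]
  have hneg := fK_neg_at K hK
  have hpos : (0:ℝ) < fK K (1/2) := by rw [fK_half]; norm_num
  have hsub := intermediate_value_Ioo (by norm_num : (1/32 : ℝ) ≤ 1/2)
    ((continuous_fK K).continuousOn)
  obtain ⟨c, hc, hfc⟩ := hsub (Set.mem_Ioo.mpr ⟨hneg, hpos⟩)
  have hcmem : c ∈ Ioo (0:ℝ) (1/2) := ⟨by linarith [hc.1], hc.2⟩
  refine ⟨c, ⟨hcmem, hfc⟩, ?_⟩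
  rintro y ⟨hy, hfy⟩
  rcases lt_trichotomy y c with h | h | h
  · exact absurd (no_two_zeros K hK hy hcmem h hfy hfc) not_false
  · exact h
  · exact absurd (no_two_zeros K hK hcmem hy h hfc hfy) not_false

theorem unique_zero_alpha1 (k : ℕ) (hk : 3 ≤ k) :
    ∃! x : ℝ, x ∈ Set.Ioo (0 : ℝ) (1 / 2) ∧
      2 * (k + 1) * x + binEnt (2 * x) - k * binEnt x = 0 := by
  have hK : (3:ℝ) ≤ (k:ℝ) := by exact_mod_cast hk
  exact main_aux (k:ℝ) hK
end

section
/- Suppose a graph process $(G_t)_{t \ge 1}$ satisfies: whenever the graph $G_t$ on vertex set $[t]$ is an $(\alpha, 1)$-expander and $G_t$ has no perfect matching, the number $\kappa_t$ of vertices isolated by a maximum matching satisfies $\kappa_{t+1} = \kappa_t - 1$ with probability at least $1 - (1-\alpha)^k$ and otherwise $\kappa_{t+1} = \kappa_t + 1$. Show the deterministic lemma underlying this: if $G$ is an $(\alpha,1)$-expander graph on $t$ vertices without a perfect matching, then the set $A(G)$ of vertices missed by some maximum matching has size $|A(G)| > \alpha t$. -/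
open SimpleGraph Set

variable {V : Type*} [Fintype V]

/-- `G` on `t` vertices is an `(α,1)`-expander: every `X` with `|X| ≤ α t`
satisfies `|N(X)| ≥ |X|`, where `N(X)` is the external neighborhood. -/
def IsOneExpander (G : SimpleGraph V) (α : ℝ) : Prop :=
  ∀ X : Set V, (X.ncard : ℝ) ≤ α * Fintype.card V →
    X.ncard ≤ {u | u ∉ X ∧ ∃ x ∈ X, G.Adj x u}.ncard

/-- A maximum matching: a matching covering the largest possible number of vertices. -/
def IsMaximumMatching {G : SimpleGraph V} (M : G.Subgraph) : Prop :=
  M.IsMatching ∧ ∀ M' : G.Subgraph, M'.IsMatching → M'.verts.ncard ≤ M.verts.ncard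

/-- `A G` is the set of vertices missed by at least one maximum matching of `G`. -/
def missedSet (G : SimpleGraph V) : Set V :=
  {v | ∃ M : G.Subgraph, IsMaximumMatching M ∧ v ∉ M.verts}

open SimpleGraph Set

noncomputable section FnMatching

variable {V : Type*}

/-- A matching as an involution: fixed points are unmatched vertices. -/
def FnM (G : SimpleGraph V) (f : V → V) : Prop :=
  Function.Involutive f ∧ ∀ x, f x ≠ x → G.Adj x (f x)

/-- support of a function matching -/
def fsupp (f : V → V) : Set V := {x | f x ≠ x}

open scoped Classical in
/-- remove the pair at `x` -/
noncomputable def rmp (f : V → V) (x : V) : V → V :=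
  fun y => if y = x ∨ y = f x then y else f y

open scoped Classical in
/-- add the pair `(x,y)` -/
noncomputable def adp (f : V → V) (x y : V) : V → V :=
  fun z => if z = x then y else if z = y then x else f z

open scoped Classical in
/-- flip: use `f` on `O` and `g` off `O` -/
noncomputable def flp (O : Set V) (f g : V → V) : V → V :=
  fun x => if x ∈ O then f x else g x

section lemmas

variable {G : SimpleGraph V} {f g : V → V} {x y : V}

lemma fnm_id : FnM G id := ⟨fun _ => rfl, fun x h => absurd rfl h⟩

lemma FnM.invol (h : FnM G f) : Function.Involutive f := h.1

lemma FnM.inj (h : FnM G f) : Function.Injective f := h.1.injective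

lemma rmp_fst (f : V → V) (x : V) : rmp f x x = x := by simp [rmp]

lemma rmp_snd (f : V → V) (x : V) : rmp f x (f x) = f x := by simp [rmp]

lemma rmp_other (f : V → V) (x : V) (hy : y ≠ x) (hy' : y ≠ f x) : rmp f x y = f y := by
  simp [rmp, hy, hy']

lemma rmp_of_fixed (hx : f x = x) : rmp f x = f := by
  funext y
  by_cases h : y = x
  · simp [rmp, h, hx]
  · simp [rmp, h, hx]

lemma FnM.rmp (hf : FnM G f) (x : V) : FnM G (rmp f x) := by
  constructor
  · intro y
    by_cases h : y = x ∨ y = f x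
    · have h1 : _root_.rmp f x y = y := by simp [_root_.rmp, h]
      rw [h1, h1]
    · push_neg at h
      rw [rmp_other f x h.1 h.2]
      have h1 : f y ≠ x := fun hc => h.2 (by rw [← hc, hf.1 y])
      have h2 : f y ≠ f x := fun hc => h.1 (hf.inj hc)
      rw [rmp_other f x h1 h2, hf.1 y]
  · intro y hy
    by_cases h : y = x ∨ y = f x
    · exfalso; apply hy; simp [_root_.rmp, h]
    · push_neg at h
      rw [rmp_other f x h.1 h.2] at hy ⊢
      exact hf.2 y hy

lemma fsupp_rmp (hf : FnM G f) (x : V) : fsupp (rmp f x) = fsupp f \ {x, f x} := by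
  ext y
  by_cases h : y = x ∨ y = f x
  · have h1 : rmp f x y = y := by simp [rmp, h]
    simp only [fsupp, mem_setOf_eq, h1, mem_diff, mem_insert_iff, mem_singleton_iff]
    tauto
  · push_neg at h
    simp only [fsupp, mem_setOf_eq, rmp_other f x h.1 h.2, mem_diff, mem_insert_iff,
      mem_singleton_iff]
    tauto

lemma msize_rmp [Fintype V] (hf : FnM G f) (hx : f x ≠ x) :
    (fsupp f).ncard = (fsupp (rmp f x)).ncard + 2 := by
  rw [fsupp_rmp hf x]
  have hsub : ({x, f x} : Set V) ⊆ fsupp f := by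
    intro z hz
    rcases hz with rfl | hz
    · exact hx
    · simp only [mem_singleton_iff] at hz
      subst hz
      simp only [fsupp, mem_setOf_eq, hf.1 x]
      exact fun hc => hx hc.symm
  have hcard : ({x, f x} : Set V).ncard = 2 := by
    rw [Set.ncard_pair (fun hc => hx hc.symm)]
  rw [Set.ncard_diff hsub (Set.toFinite _), hcard]
  have := Set.ncard_le_ncard hsub (Set.toFinite _)
  omega

lemma adp_fst (f : V → V) (x y : V) : adp f x y x = y := by simp [adp]

lemma adp_snd (f : V → V) (hxy : x ≠ y) : adp f x y y = x := by simp [adp, hxy.symm]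

lemma adp_other (f : V → V) {z : V} (hz : z ≠ x) (hz' : z ≠ y) : adp f x y z = f z := by
  simp [adp, hz, hz']

lemma FnM.adp (hf : FnM G f) (hx : f x = x) (hy : f y = y) (hxy : x ≠ y) (hadj : G.Adj x y) :
    FnM G (adp f x y) := by
  constructor
  · intro z
    by_cases h1 : z = x
    · subst h1; rw [adp_fst, adp_snd f hxy]
    · by_cases h2 : z = y
      · subst h2; rw [adp_snd f hxy, adp_fst]
      · rw [adp_other f h1 h2]
        have g1 : f z ≠ x := fun hc => h1 (by rw [← hf.1 z, hc, hx])
        have g2 : f z ≠ y := fun hc => h2 (by rw [← hf.1 z, hc, hy])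
        rw [adp_other f g1 g2, hf.1 z]
  · intro z hz
    by_cases h1 : z = x
    · subst h1; rw [adp_fst] at *; exact hadj
    · by_cases h2 : z = y
      · subst h2; rw [adp_snd f hxy] at *; exact hadj.symm
      · rw [adp_other f h1 h2] at hz ⊢; exact hf.2 z hz

lemma fsupp_adp (hx : f x = x) (hy : f y = y) (hxy : x ≠ y) :
    fsupp (adp f x y) = fsupp f ∪ {x, y} := by
  ext z
  by_cases h1 : z = x
  · subst h1
    simp only [fsupp, mem_setOf_eq, adp_fst, mem_union, mem_insert_iff, mem_singleton_iff]
    tauto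
  · by_cases h2 : z = y
    · subst h2
      simp only [fsupp, mem_setOf_eq, adp_snd f hxy, mem_union, mem_insert_iff,
        mem_singleton_iff]
      tauto
    · simp only [fsupp, mem_setOf_eq, adp_other f h1 h2, mem_union, mem_insert_iff,
        mem_singleton_iff]
      tauto

lemma msize_adp [Fintype V] (hx : f x = x) (hy : f y = y) (hxy : x ≠ y) :
    (fsupp (adp f x y)).ncard = (fsupp f).ncard + 2 := by
  rw [fsupp_adp hx hy hxy]
  have hdisj : Disjoint (fsupp f) ({x, y} : Set V) := by
    rw [Set.disjoint_right]
    intro z hz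
    rcases hz with rfl | hz
    · simp [fsupp, hx]
    · simp only [mem_singleton_iff] at hz; subst hz; simp [fsupp, hy]
  rw [Set.ncard_union_eq hdisj (Set.toFinite _) (Set.toFinite _), Set.ncard_pair hxy]

lemma flp_mem {O : Set V} (hx : x ∈ O) : flp O f g x = f x := by simp [flp, hx]

lemma flp_not_mem {O : Set V} (hx : x ∉ O) : flp O f g x = g x := by simp [flp, hx]

lemma FnM.flp (hf : FnM G f) (hg : FnM G g) {O : Set V}
    (hOf : ∀ x ∈ O, f x ∈ O) (hOg : ∀ x ∈ O, g x ∈ O) : FnM G (flp O f g) := by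
  constructor
  · intro z
    by_cases h : z ∈ O
    · rw [flp_mem h, flp_mem (hOf z h), hf.1]
    · have hgz : g z ∉ O := fun hc => h (by rw [← hg.1 z]; exact hOg _ hc)
      rw [flp_not_mem h, flp_not_mem hgz, hg.1]
  · intro z hz
    by_cases h : z ∈ O
    · rw [flp_mem h] at hz ⊢; exact hf.2 z hz
    · rw [flp_not_mem h] at hz ⊢; exact hg.2 z hz

lemma fsupp_flp {O : Set V} :
    fsupp (flp O f g) = (fsupp f ∩ O) ∪ (fsupp g \ O) := by
  ext z
  by_cases h : z ∈ O
  · simp [fsupp, flp_mem h, h]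
  · simp [fsupp, flp_not_mem h, h]

lemma msize_flp [Fintype V] {O : Set V} :
    (fsupp (flp O f g)).ncard + (fsupp g ∩ O).ncard
      = (fsupp g).ncard + (fsupp f ∩ O).ncard := by
  rw [fsupp_flp]
  have h1 : Disjoint (fsupp f ∩ O) (fsupp g \ O) :=
    Set.disjoint_of_subset_left (Set.inter_subset_right) (disjoint_sdiff_self_right)
  rw [Set.ncard_union_eq h1 (Set.toFinite _) (Set.toFinite _)]
  have h2 : (fsupp g \ O).ncard + (fsupp g ∩ O).ncard = (fsupp g).ncard := by
    rw [← Set.ncard_union_eq (Set.disjoint_of_subset_right (Set.inter_subset_right)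
      (Set.disjoint_sdiff_left)) (Set.toFinite _) (Set.toFinite _), Set.diff_union_inter]
  omega

end lemmas
end FnMatching

open SimpleGraph Set

noncomputable section WalkSec

variable {V : Type*}

noncomputable def wk (φ ψ : V → V) (p : V) : ℕ → V
  | 0 => p
  | n + 1 => if Even n then ψ (wk φ ψ p n) else φ (wk φ ψ p n)

lemma walk_structure [Finite V] {φ ψ : V → V} {p : V}
    (hφ : Function.Involutive φ) (hψ : Function.Involutive ψ) (hp : φ p = p) :
    ∃ (O : Set V) (z : V), p ∈ O ∧ z ∈ O ∧ (∀ x ∈ O, φ x ∈ O) ∧ (∀ x ∈ O, ψ x ∈ O) ∧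
      (∀ C : Set V, p ∈ C → (∀ x ∈ C, φ x ∈ C) → (∀ x ∈ C, ψ x ∈ C) → O ⊆ C) ∧
      (({x ∈ O | φ x = x} = {p, z} ∧ {x ∈ O | ψ x = x} = (∅ : Set V) ∧ z ≠ p) ∨
       ({x ∈ O | φ x = x} = {p} ∧ {x ∈ O | ψ x = x} = {z})) := by
  set a : ℕ → V := wk φ ψ p with ha
  have ha0 : a 0 = p := rfl
  have ha_even : ∀ n, Even n → a (n + 1) = ψ (a n) := by
    intro n h; simp only [ha, wk, if_pos h]
  have ha_odd : ∀ n, ¬Even n → a (n + 1) = φ (a n) := by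
    intro n h; simp only [ha, wk, if_neg h]
  have hpsi_odd : ∀ n, ¬Even n → ψ (a n) = a (n - 1) := by
    intro n h
    cases n with
    | zero => exact absurd Even.zero h
    | succ j =>
      have hj : Even j := by
        rcases Nat.even_or_odd j with hj | hj
        · exact hj
        · exact absurd (Odd.add_one hj) h
      rw [ha_even j hj, hψ]
      simp
  have hphi_even : ∀ n, Even n → 0 < n → φ (a n) = a (n - 1) := by
    intro n h hn
    cases n with
    | zero => omega
    | succ j =>
      have hj : ¬Even j := Nat.even_add_one.mp h
      rw [ha_odd j hj, hφ]
      simp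
  have hex : ∃ n, ∃ k ≤ n, a (n + 1) = a k := by
    obtain ⟨i, j, hij, he⟩ := Finite.exists_ne_map_eq_of_infinite a
    rcases Nat.lt_or_ge i j with h | h
    · refine ⟨j - 1, i, by omega, ?_⟩
      rw [show j - 1 + 1 = j by omega]; exact he.symm
    · refine ⟨i - 1, j, by omega, ?_⟩
      rw [show i - 1 + 1 = i by omega]; exact he
  classical
  obtain ⟨m, ⟨k, hkm, hk⟩, hmin⟩ :
      ∃ m, (∃ k ≤ m, a (m + 1) = a k) ∧ ∀ n < m, ¬∃ k ≤ n, a (n + 1) = a k :=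
    ⟨Nat.find hex, Nat.find_spec hex, fun n h => Nat.find_min hex h⟩
  have inj : ∀ i j, i ≤ m → j ≤ m → a i = a j → i = j := by
    intro i j hi hj he
    by_contra hne
    wlog hlt : i < j generalizing i j
    · exact this j i hj hi he.symm (Ne.symm hne) (by omega)
    have hj1 : j - 1 < m := by omega
    exact hmin (j - 1) hj1 ⟨i, by omega, by rw [show j - 1 + 1 = j by omega]; exact he.symm⟩
  have hstop : a (m + 1) = a m := by
    rcases Nat.eq_or_lt_of_le hkm with rfl | hklt
    · exact hk
    by_cases hme : Even m
    · rw [ha_even m hme] at hk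
      have h2 : a m = ψ (a k) := by rw [← hk, hψ]
      by_cases hke : Even k
      · have h3 : a (k + 1) = a m := by rw [ha_even k hke, ← h2]
        have hkm1 : k + 1 = m := inj (k + 1) m (by omega) le_rfl h3
        have h4 : Even (k + 1) := by rw [hkm1]; exact hme
        exact absurd hke (Nat.even_add_one.mp h4)
      · have hk1 : k ≠ 0 := by rintro rfl; exact hke Even.zero
        rw [hpsi_odd k hke] at h2
        have := inj m (k - 1) le_rfl (by omega) h2
        omega
    · rw [ha_odd m hme] at hk
      have h2 : a m = φ (a k) := by rw [← hk, hφ]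
      by_cases hke : Even k
      · by_cases hk0 : k = 0
        · subst hk0
          rw [ha0, hp, ← ha0] at h2
          have := inj m 0 le_rfl (by omega) h2
          omega
        · rw [hphi_even k hke (by omega)] at h2
          have := inj m (k - 1) le_rfl (by omega) h2
          omega
      · have h3 : a (k + 1) = a m := by rw [ha_odd k hke, ← h2]
        have hkm1 : k + 1 = m := inj (k + 1) m (by omega) le_rfl h3
        have h4 : Even m := by rw [← hkm1]; exact Nat.even_add_one.mpr hke
        exact absurd h4 hme
  refine ⟨a '' Set.Iic m, a m, ⟨0, by simp, ha0⟩, ⟨m, by simp, rfl⟩, ?_, ?_, ?_, ?_⟩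
  · rintro x ⟨n, hn, rfl⟩
    simp only [Set.mem_Iic] at hn
    by_cases hne : Even n
    · by_cases hn0 : n = 0
      · subst hn0; rw [ha0, hp, ← ha0]; exact ⟨0, by simp, rfl⟩
      · rw [hphi_even n hne (by omega)]
        exact ⟨n - 1, by simp only [Set.mem_Iic]; omega, rfl⟩
    · rcases Nat.eq_or_lt_of_le hn with rfl | hlt
      · rw [← ha_odd n hne, hstop]; exact ⟨n, by simp, rfl⟩
      · rw [← ha_odd n hne]; exact ⟨n + 1, by simp only [Set.mem_Iic]; omega, rfl⟩
  · rintro x ⟨n, hn, rfl⟩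
    simp only [Set.mem_Iic] at hn
    by_cases hne : Even n
    · rcases Nat.eq_or_lt_of_le hn with rfl | hlt
      · rw [← ha_even n hne, hstop]; exact ⟨n, by simp, rfl⟩
      · rw [← ha_even n hne]; exact ⟨n + 1, by simp only [Set.mem_Iic]; omega, rfl⟩
    · rw [hpsi_odd n hne]; exact ⟨n - 1, by simp only [Set.mem_Iic]; omega, rfl⟩
  · intro C hpC hCφ hCψ
    have hall : ∀ n, a n ∈ C := by
      intro n
      induction n with
      | zero => rwa [ha0]
      | succ n ih =>
        by_cases hne : Even n
        · rw [ha_even n hne]; exact hCψ _ ih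
        · rw [ha_odd n hne]; exact hCφ _ ih
    rintro x ⟨n, _, rfl⟩
    exact hall n
  · have hFφ : ∀ n ≤ m, φ (a n) = a n → n = 0 ∨ (n = m ∧ ¬Even m) := by
      intro n hn hfix
      by_cases hne : Even n
      · left
        by_contra hn0
        rw [hphi_even n hne (by omega)] at hfix
        have := inj (n - 1) n (by omega) hn hfix
        omega
      · right
        rcases Nat.eq_or_lt_of_le hn with rfl | hlt
        · exact ⟨rfl, hne⟩
        · exfalso
          have h3 : a (n + 1) = a n := by rw [ha_odd n hne, hfix]
          have := inj (n + 1) n (by omega) (by omega) h3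
          omega
    have hFψ : ∀ n ≤ m, ψ (a n) = a n → n = m ∧ Even m := by
      intro n hn hfix
      by_cases hne : Even n
      · rcases Nat.eq_or_lt_of_le hn with rfl | hlt
        · exact ⟨rfl, hne⟩
        · exfalso
          have h3 : a (n + 1) = a n := by rw [ha_even n hne, hfix]
          have := inj (n + 1) n (by omega) (by omega) h3
          omega
      · exfalso
        have hn1 : n ≠ 0 := by rintro rfl; exact hne Even.zero
        rw [hpsi_odd n hne] at hfix
        have := inj (n - 1) n (by omega) hn hfix
        omega
    by_cases hme : Even m
    · right
      constructor
      · ext x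
        simp only [Set.mem_setOf_eq, Set.mem_singleton_iff]
        constructor
        · rintro ⟨⟨n, hn, rfl⟩, hfix⟩
          simp only [Set.mem_Iic] at hn
          rcases hFφ n hn hfix with h0 | ⟨_, h⟩
          · subst h0; exact ha0
          · exact absurd hme h
        · rintro rfl
          exact ⟨⟨0, by simp, ha0⟩, hp⟩
      · ext x
        simp only [Set.mem_setOf_eq, Set.mem_singleton_iff]
        constructor
        · rintro ⟨⟨n, hn, rfl⟩, hfix⟩
          simp only [Set.mem_Iic] at hn
          rcases hFψ n hn hfix with ⟨rfl, _⟩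
          rfl
        · rintro rfl
          refine ⟨⟨m, by simp, rfl⟩, ?_⟩
          rw [← ha_even m hme, hstop]
    · left
      refine ⟨?_, ?_, ?_⟩
      · ext x
        simp only [Set.mem_setOf_eq, Set.mem_insert_iff, Set.mem_singleton_iff]
        constructor
        · rintro ⟨⟨n, hn, rfl⟩, hfix⟩
          simp only [Set.mem_Iic] at hn
          rcases hFφ n hn hfix with h0 | ⟨rfl, _⟩
          · subst h0; left; exact ha0
          · right; rfl
        · rintro (rfl | rfl)
          · exact ⟨⟨0, by simp, ha0⟩, hp⟩
          · refine ⟨⟨m, by simp, rfl⟩, ?_⟩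
            rw [← ha_odd m hme, hstop]
      · ext x
        simp only [Set.mem_setOf_eq, Set.mem_empty_iff_false, iff_false]
        rintro ⟨⟨n, hn, rfl⟩, hfix⟩
        simp only [Set.mem_Iic] at hn
        rcases hFψ n hn hfix with ⟨rfl, h⟩
        exact hme h
      · intro hzp
        rw [← ha0] at hzp
        have := inj m 0 le_rfl (by omega) hzp
        subst this
        exact hme Even.zero

end WalkSec

section Key

variable {V : Type*} [Fintype V] {G : SimpleGraph V}

lemma ncard_diff_add {A B : Set V} (h : B ⊆ A) : (A \ B).ncard + B.ncard = A.ncard := by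
  rw [← Set.ncard_union_eq disjoint_sdiff_left (Set.toFinite _) (Set.toFinite _),
    Set.diff_union_of_subset h]

lemma key {s : ℕ}
    (hs : ∀ h, FnM G h → (fsupp h).ncard ≤ s)
    {f g : V → V} (hf : FnM G f) (hfs : (fsupp f).ncard = s)
    (hg : FnM G g) (hgs : (fsupp g).ncard = s)
    {v u w : V} (hfv : f v = v) (hgv : g v = v) (hgw : g w = w)
    (hwv : w ≠ v) (huv : u ≠ v) (hadj : G.Adj w u)
    (hnotB : ¬ ∃ h, FnM G h ∧ (fsupp h).ncard = s ∧ h v = v ∧ h u = u) :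
    ∃ h, FnM G h ∧ (fsupp h).ncard = s ∧ h v = v ∧ h (f u) = f u := by
  have huw : u ≠ w := fun hc => (G.ne_of_adj hadj) hc.symm
  have hfu : f u ≠ u := by
    by_contra h; exact hnotB ⟨f, hf, hfs, hfv, h⟩
  have hgu : g u ≠ u := by
    by_contra h; exact hnotB ⟨g, hg, hgs, hgv, h⟩
  set p := f u with hpdef
  have hfp : f p = u := hf.1 u
  have hpu : p ≠ u := hfu
  have hpv : p ≠ v := fun hc => huv (by rw [← hfp, hc, hfv])
  by_cases hgp : g p = p
  · exact ⟨g, hg, hgs, hgv, hgp⟩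
  have hpw : p ≠ w := by intro hc; rw [hc] at hgp; exact hgp hgw
  set p' := g u with hp'def
  have hgp' : g p' = u := hg.1 u
  have hp'u : p' ≠ u := hgu
  have hp'v : p' ≠ v := fun hc => huv (by rw [← hgp', hc, hgv])
  have hp'w : p' ≠ w := fun hc => huw (by rw [← hgp', hc, hgw])
  by_cases hpp' : p' = p
  · have h1 : FnM G (rmp g u) := hg.rmp u
    have hw1 : rmp g u w = w := by
      rw [rmp_other g u huw.symm hp'w.symm, hgw]
    refine ⟨adp (rmp g u) u w, h1.adp (rmp_fst g u) hw1 huw hadj.symm, ?_, ?_, ?_⟩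
    · have e1 := msize_adp (f := rmp g u) (rmp_fst g u) hw1 huw
      have e2 := msize_rmp hg hgu
      omega
    · rw [adp_other _ huv.symm hwv.symm, rmp_other g u huv.symm hp'v.symm, hgv]
    · rw [adp_other _ hpu hpw, ← hpp', hp'def]
      exact rmp_snd g u
  -- main case
  set f1 := rmp f u with hf1def
  have hf1 : FnM G f1 := hf.rmp u
  have f1u : f1 u = u := rmp_fst f u
  have f1p : f1 p = p := rmp_snd f u
  have f1v : f1 v = v := by rw [hf1def, rmp_other f u huv.symm hpv.symm, hfv]
  have f1w : f1 w = f w := rmp_other f u huw.symm hpw.symm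
  have hufw : u ≠ f w := fun hc => hpw (by rw [hpdef, hc, hf.1 w])
  have hpfw : p ≠ f w := fun hc => huw (by rw [← hfp, hc, hf.1 w])
  have hvfw : v ≠ f w := fun hc => hwv.symm (by rw [← hfv, hc, hf.1 w])
  set f2 := rmp f1 w with hf2def
  have hf2 : FnM G f2 := hf1.rmp w
  have f2w : f2 w = w := rmp_fst f1 w
  have f2fw : f2 (f w) = f w := by
    have h0 := rmp_snd f1 w
    rwa [f1w] at h0
  have f2u : f2 u = u := by
    rw [hf2def, rmp_other f1 w huw (by rw [f1w]; exact hufw), f1u]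
  have f2p : f2 p = p := by
    rw [hf2def, rmp_other f1 w hpw (by rw [f1w]; exact hpfw), f1p]
  have f2v : f2 v = v := by
    rw [hf2def, rmp_other f1 w hwv.symm (by rw [f1w]; exact hvfw), f1v]
  set g1 := rmp g u with hg1def
  have hg1 : FnM G g1 := hg.rmp u
  have g1u : g1 u = u := rmp_fst g u
  have g1p' : g1 p' = p' := rmp_snd g u
  have g1v : g1 v = v := by rw [hg1def, rmp_other g u huv.symm hp'v.symm, hgv]
  have g1w : g1 w = w := by rw [hg1def, rmp_other g u huw.symm hp'w.symm, hgw]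
  have g1p : g1 p ≠ p := by
    rw [hg1def, rmp_other g u hpu (fun hc => hpp' hc.symm)]
    exact hgp
  obtain ⟨O, z, hpO, hzO, hOφ, hOψ, hOmin, hcases⟩ := walk_structure hf2.1 hg1.1 f2p
  have hexcl : ∀ y, y ≠ p → f2 y = y → g1 y = y → y ∉ O := by
    intro y hyp hfy hgy hc
    refine (hOmin {x | x ≠ y} hyp.symm ?_ ?_ hc) rfl
    · exact fun x hx hfx => hx (by rw [← hf2.1 x, hfx, hfy])
    · exact fun x hx hgx => hx (by rw [← hg1.1 x, hgx, hgy])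
  have hunotO : u ∉ O := hexcl u hpu.symm f2u g1u
  have hvnotO : v ∉ O := hexcl v hpv.symm f2v g1v
  have hwnotO : w ∉ O := hexcl w hpw.symm f2w g1w
  have hsuppf2 : fsupp f2 ∩ O = O \ {x ∈ O | f2 x = x} := by
    ext x; simp only [fsupp, Set.mem_inter_iff, Set.mem_setOf_eq, Set.mem_diff]; tauto
  have hsuppg1 : fsupp g1 ∩ O = O \ {x ∈ O | g1 x = x} := by
    ext x; simp only [fsupp, Set.mem_inter_iff, Set.mem_setOf_eq, Set.mem_diff]; tauto
  have hzu : z ≠ u := fun hc => hunotO (hc ▸ hzO)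
  have hzw : z ≠ w := fun hc => hwnotO (hc ▸ hzO)
  rcases hcases with ⟨hFφ, hFψ, hzp⟩ | ⟨hFφ, hFψ⟩
  · -- odd case
    have hf2z : f2 z = z := by
      have hmem : z ∈ {x ∈ O | f2 x = x} := by
        rw [hFφ]; exact Set.mem_insert_iff.mpr (Or.inr rfl)
      exact hmem.2
    have haO : (fsupp f2 ∩ O).ncard + 2 = O.ncard := by
      rw [hsuppf2]
      have hsub : {x ∈ O | f2 x = x} ⊆ O := fun x hx => hx.1
      have h0 := ncard_diff_add hsub
      rw [hFφ] at h0 ⊢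
      rw [Set.ncard_pair (fun hc => hzp hc.symm)] at h0
      exact h0
    have hbO : (fsupp g1 ∩ O).ncard = O.ncard := by
      rw [hsuppg1, hFψ, Set.diff_empty]
    have hp'notO : p' ∉ O := by
      intro hc
      have hmem : p' ∈ {x ∈ O | g1 x = x} := ⟨hc, g1p'⟩
      rw [hFψ] at hmem
      exact absurd hmem (Set.notMem_empty p')
    by_cases hfz : f z = z
    · -- contradiction branch: u would be in B(v)
      exfalso
      set h2 := flp O g1 f2 with hh2def
      have hh2 : FnM G h2 := hg1.flp hf2 hOψ hOφ
      have e1 := msize_flp (f := g1) (g := f2) (O := O)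
      rw [← hh2def] at e1
      have h2v : h2 v = v := by rw [hh2def, flp_not_mem hvnotO, f2v]
      have h2u : h2 u = u := by rw [hh2def, flp_not_mem hunotO, f2u]
      have ef := msize_rmp hf hfu
      rw [← hf1def] at ef
      by_cases hfw : f w = w
      · have hf2f1 : f2 = f1 := rmp_of_fixed (by rw [f1w, hfw])
        apply hnotB
        refine ⟨h2, hh2, ?_, h2v, h2u⟩
        rw [hf2f1] at e1 haO
        omega
      · have ef1 := msize_rmp hf1 (show f1 w ≠ w by rw [f1w]; exact hfw)
        rw [← hf2def] at ef1
        have hfwO : f w ∉ O := by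
          intro hc
          have hmem : f w ∈ {x ∈ O | f2 x = x} := ⟨hc, f2fw⟩
          rw [hFφ] at hmem
          simp only [Set.mem_insert_iff, Set.mem_singleton_iff] at hmem
          rcases hmem with hcc | hcc
          · exact huw (by rw [← hfp, ← hcc]; exact hf.1 w)
          · have h5 : f z = w := by rw [← hcc]; exact hf.1 w
            rw [hfz] at h5
            exact hzw h5
        have h2w : h2 w = w := by rw [hh2def, flp_not_mem hwnotO, f2w]
        have h2fw : h2 (f w) = f w := by rw [hh2def, flp_not_mem hfwO, f2fw]
        have hwfw : w ≠ f w := fun hc => hfw hc.symm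
        apply hnotB
        refine ⟨adp h2 w (f w), hh2.adp h2w h2fw hwfw (hf.2 w hfw), ?_, ?_, ?_⟩
        · have e2 := msize_adp (f := h2) h2w h2fw hwfw
          omega
        · rw [adp_other _ hwv.symm hvfw, h2v]
        · rw [adp_other _ huw hufw, h2u]
    · -- z = f w branch
      have hzfw : z = f w := by
        by_contra hc
        apply hfz
        have e1 : f2 z = f1 z := by
          rw [hf2def]; exact rmp_other f1 w hzw (by rw [f1w]; exact hc)
        have e2 : f1 z = f z := by rw [hf1def]; exact rmp_other f u hzu hzp
        rw [← e2, ← e1, hf2z]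
      have hfw : f w ≠ w := by
        intro hc
        rw [hzfw, hc] at hzO
        exact hwnotO hzO
      have f1z : f1 z = w := by
        rw [hf1def, rmp_other f u hzu hzp, hzfw, hf.1 w]
      have f1_other : ∀ x, x ∈ O → x ≠ z → f1 x = f2 x := by
        intro x hxO hxz
        rw [hf2def, rmp_other f1 w (fun hc => hwnotO (hc ▸ hxO))
          (by rw [f1w, ← hzfw]; exact hxz)]
      set S := insert w O with hSdef
      have hSf1 : ∀ x ∈ S, f1 x ∈ S := by
        intro x hx
        rcases Set.mem_insert_iff.mp hx with hxw | hxO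
        · rw [hxw, f1w, ← hzfw]
          exact Set.mem_insert_iff.mpr (Or.inr hzO)
        · by_cases hxz : x = z
          · rw [hxz, f1z]
            exact Set.mem_insert w O
          · rw [f1_other x hxO hxz]
            exact Set.mem_insert_iff.mpr (Or.inr (hOφ x hxO))
      have hSg : ∀ x ∈ S, g x ∈ S := by
        intro x hx
        rcases Set.mem_insert_iff.mp hx with hxw | hxO
        · rw [hxw, hgw]; exact Set.mem_insert w O
        · have e1 : g x = g1 x := by
            rw [hg1def, rmp_other g u (fun hc => hunotO (hc ▸ hxO))
              (fun hc => hp'notO (by rw [hp'def, ← hc]; exact hxO))]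
          rw [e1]
          exact Set.mem_insert_iff.mpr (Or.inr (hOψ x hxO))
      set h9 := flp S f1 g with hh9def
      have hh9 : FnM G h9 := hf1.flp hg hSf1 hSg
      have hvS : v ∉ S := by
        intro hc
        rcases Set.mem_insert_iff.mp hc with hcc | hcc
        · exact hwv hcc.symm
        · exact hvnotO hcc
      refine ⟨h9, hh9, ?_, ?_, ?_⟩
      · have e1 := msize_flp (f := f1) (g := g) (O := S)
        rw [← hh9def] at e1
        have claim1 : fsupp g ∩ S = fsupp g1 ∩ O := by
          ext x
          simp only [Set.mem_inter_iff, fsupp, Set.mem_setOf_eq, hSdef, Set.mem_insert_iff]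
          constructor
          · rintro ⟨hgx, hxw | hxO⟩
            · rw [hxw] at hgx; exact absurd hgw hgx
            · refine ⟨?_, hxO⟩
              rwa [hg1def, rmp_other g u (fun hc => hunotO (hc ▸ hxO))
                (fun hc => hp'notO (by rw [hp'def, ← hc]; exact hxO))]
          · rintro ⟨hgx, hxO⟩
            refine ⟨?_, Or.inr hxO⟩
            rwa [hg1def, rmp_other g u (fun hc => hunotO (hc ▸ hxO))
              (fun hc => hp'notO (by rw [hp'def, ← hc]; exact hxO))] at hgx
        have claim2 : fsupp f1 ∩ S = (fsupp f2 ∩ O) ∪ {z, w} := by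
          ext x
          simp only [Set.mem_inter_iff, fsupp, Set.mem_setOf_eq, hSdef, Set.mem_insert_iff,
            Set.mem_union, Set.mem_singleton_iff]
          constructor
          · rintro ⟨hfx, hxw | hxO⟩
            · exact Or.inr (Or.inr hxw)
            · by_cases hxz : x = z
              · exact Or.inr (Or.inl hxz)
              · exact Or.inl ⟨by rwa [f1_other x hxO hxz] at hfx, hxO⟩
          · rintro (⟨hfx, hxO⟩ | hxz | hxw)
            · refine ⟨?_, Or.inr hxO⟩
              by_cases hxz : x = z
              · rw [hxz, f1z]; exact hzw.symm
              · rwa [f1_other x hxO hxz]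
            · refine ⟨?_, Or.inr (by rw [hxz]; exact hzO)⟩
              rw [hxz, f1z]; exact hzw.symm
            · refine ⟨?_, Or.inl hxw⟩
              rw [hxw, f1w]
              exact hfw
        have hdisj : Disjoint (fsupp f2 ∩ O) ({z, w} : Set V) := by
          rw [Set.disjoint_right]
          intro x hx
          rcases hx with rfl | hx
          · simp only [Set.mem_inter_iff, fsupp, Set.mem_setOf_eq]
            exact fun hc => hc.1 hf2z
          · simp only [Set.mem_singleton_iff] at hx
            subst hx
            simp only [Set.mem_inter_iff]
            exact fun hc => hwnotO hc.2
        have e2 : (fsupp f1 ∩ S).ncard = (fsupp f2 ∩ O).ncard + 2 := by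
          rw [claim2, Set.ncard_union_eq hdisj (Set.toFinite _) (Set.toFinite _),
            Set.ncard_pair hzw]
        rw [claim1] at e1
        omega
      · rw [hh9def, flp_not_mem hvS, hgv]
      · rw [hh9def, flp_mem (Set.mem_insert_iff.mpr (Or.inr hpO)), f1p]
  · -- even case
    have haO : (fsupp f2 ∩ O).ncard + 1 = O.ncard := by
      rw [hsuppf2]
      have hsub : {x ∈ O | f2 x = x} ⊆ O := fun x hx => hx.1
      have h0 := ncard_diff_add hsub
      rw [hFφ] at h0 ⊢
      rw [Set.ncard_singleton] at h0
      exact h0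
    have hbO : (fsupp g1 ∩ O).ncard + 1 = O.ncard := by
      rw [hsuppg1]
      have hsub : {x ∈ O | g1 x = x} ⊆ O := fun x hx => hx.1
      have h0 := ncard_diff_add hsub
      rw [hFψ] at h0 ⊢
      rw [Set.ncard_singleton] at h0
      exact h0
    set h1 := flp O f2 g1 with hh1def
    have hh1 : FnM G h1 := hf2.flp hg1 hOφ hOψ
    have h1u : h1 u = u := by rw [hh1def, flp_not_mem hunotO, g1u]
    have h1w : h1 w = w := by rw [hh1def, flp_not_mem hwnotO, g1w]
    refine ⟨adp h1 u w, hh1.adp h1u h1w huw hadj.symm, ?_, ?_, ?_⟩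
    · have e1 := msize_adp (f := h1) h1u h1w huw
      have e2 := msize_flp (f := f2) (g := g1) (O := O)
      rw [← hh1def] at e2
      have e3 := msize_rmp hg hgu
      rw [← hg1def] at e3
      omega
    · rw [adp_other _ huv.symm hwv.symm, hh1def, flp_not_mem hvnotO, g1v]
    · rw [adp_other _ hpu hpw, hh1def, flp_mem hpO, f2p]

end Key

section Bridges

variable {V : Type*} {G : SimpleGraph V}

lemma exists_fn_of_matching {M : G.Subgraph} (hM : M.IsMatching) :
    ∃ f, FnM G f ∧ fsupp f = M.verts := by
  classical
  refine ⟨fun x => if h : x ∈ M.verts then (hM h).choose else x, ⟨?_, ?_⟩, ?_⟩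
  · intro x
    by_cases hx : x ∈ M.verts
    · simp only [dif_pos hx]
      have hadj : M.Adj x (hM hx).choose := (hM hx).choose_spec.1
      have hy : (hM hx).choose ∈ M.verts := M.edge_vert hadj.symm
      simp only [dif_pos hy]
      exact ((hM hy).choose_spec.2 x hadj.symm).symm
    · simp only [dif_neg hx]
  · intro x hx
    by_cases h : x ∈ M.verts
    · simp only [dif_pos h] at hx ⊢
      exact M.adj_sub (hM h).choose_spec.1
    · simp only [dif_neg h] at hx
      exact absurd rfl hx
  · ext x
    by_cases h : x ∈ M.verts
    · simp only [fsupp, Set.mem_setOf_eq, dif_pos h]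
      have hadj : M.Adj x (hM h).choose := (hM h).choose_spec.1
      have hne : (hM h).choose ≠ x := (M.adj_sub hadj).ne'
      simp [hne, h]
    · simp [fsupp, dif_neg h, h]

lemma exists_matching_of_fn {f : V → V} (hf : FnM G f) :
    ∃ M : G.Subgraph, M.IsMatching ∧ M.verts = fsupp f := by
  refine ⟨⟨fsupp f, fun x y => f x = y ∧ x ≠ y, ?_, ?_, ?_⟩, ?_, rfl⟩
  · rintro x y ⟨h1, h2⟩
    have : f x ≠ x := by rw [h1]; exact Ne.symm h2
    have := hf.2 x this
    rwa [h1] at this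
  · rintro x y ⟨h1, h2⟩
    rw [fsupp, Set.mem_setOf_eq, h1]
    exact Ne.symm h2
  · constructor; rintro x y ⟨h1, h2⟩
    exact ⟨by rw [← h1, hf.1], h2.symm⟩
  · intro x hx
    refine ⟨f x, ⟨rfl, Ne.symm hx⟩, ?_⟩
    rintro y ⟨h1, _⟩
    exact h1.symm

end Bridges


/-- A "perfect matching" in the sense of the paper: a matching isolating at most
one vertex.  If an `(α,1)`-expander graph on `t` vertices has no such matching,
then the set of vertices missed by some maximum matching has size `> α t`. -/
theorem missedSet_large_of_expander (t : ℕ) (G : SimpleGraph (Fin t)) (α : ℝ)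
    (hα : 0 < α)
    (hexp : IsOneExpander G α)
    (hnpm : ¬ ∃ M : G.Subgraph, M.IsMatching ∧ (M.vertsᶜ).ncard ≤ 1) :
    α * t < (missedSet G).ncard := by
  classical
  set T : Set ℕ := {n | ∃ f, FnM G f ∧ (fsupp f).ncard = n} with hTdef
  have hT0 : (0 : ℕ) ∈ T := by
    refine ⟨id, fnm_id, ?_⟩
    have : fsupp (id : Fin t → Fin t) = ∅ := by ext x; simp [fsupp]
    rw [this, Set.ncard_empty]
  have hTbdd : BddAbove T := by
    refine ⟨Fintype.card (Fin t), ?_⟩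
    rintro n ⟨f, _, rfl⟩
    calc (fsupp f).ncard ≤ (Set.univ : Set (Fin t)).ncard :=
          Set.ncard_le_ncard (Set.subset_univ _) (Set.toFinite _)
      _ = Fintype.card (Fin t) := by rw [Set.ncard_univ, Nat.card_eq_fintype_card]
  set s := sSup T with hsdef
  obtain ⟨f, hf, hfs⟩ : s ∈ T := Nat.sSup_mem ⟨0, hT0⟩ hTbdd
  have hs : ∀ h, FnM G h → (fsupp h).ncard ≤ s := fun h hh => le_csSup hTbdd ⟨h, hh, rfl⟩
  obtain ⟨M, hM, hMv⟩ := exists_matching_of_fn hf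
  have hc2 : 1 < (M.vertsᶜ).ncard := by
    by_contra hlt
    push_neg at hlt
    exact hnpm ⟨M, hM, hlt⟩
  obtain ⟨v, w₀, hvmem, hw₀mem, hvw₀⟩ := (Set.one_lt_ncard_iff (Set.toFinite _)).mp hc2
  rw [hMv] at hvmem hw₀mem
  have hfv : f v = v := not_not.mp hvmem
  have hfw₀ : f w₀ = w₀ := not_not.mp hw₀mem
  set B : Set (Fin t) :=
    {x | x ≠ v ∧ ∃ h, FnM G h ∧ (fsupp h).ncard = s ∧ h v = v ∧ h x = x} with hBdef
  have hw₀B : w₀ ∈ B := ⟨hvw₀.symm, f, hf, hfs, hfv, hfw₀⟩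
  set NB : Set (Fin t) := {u | u ∉ B ∧ ∃ x ∈ B, G.Adj x u} with hNBdef
  have hvNB : ∀ x ∈ B, ¬ G.Adj x v := by
    rintro x ⟨hxv, h, hh, hhs, hhv, hhx⟩ hadj
    have e1 := msize_adp (f := h) hhx hhv hxv
    have e2 := hs _ (hh.adp hhx hhv hxv hadj)
    omega
  have hmap : ∀ u ∈ NB, f u ∈ B ∧ f u ≠ w₀ := by
    rintro u ⟨huB, x, hxB, hadj⟩
    have huv : u ≠ v := by rintro rfl; exact hvNB x hxB hadj
    obtain ⟨hxv, g, hg, hgs, hgv, hgx⟩ := hxB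
    have hnotB' : ¬ ∃ h, FnM G h ∧ (fsupp h).ncard = s ∧ h v = v ∧ h u = u := by
      rintro ⟨h, hh, hhs, hhv, hhu⟩
      exact huB ⟨huv, h, hh, hhs, hhv, hhu⟩
    obtain ⟨h, hh, hhs, hhv, hhp⟩ := key hs hf hfs hg hgs hfv hgv hgx hxv huv hadj hnotB'
    have hfuu : f u ≠ u := fun hc => hnotB' ⟨f, hf, hfs, hfv, hc⟩
    have hfuv : f u ≠ v := fun hc => huv (by rw [← hf.1 u, hc, hfv])
    refine ⟨⟨hfuv, h, hh, hhs, hhv, hhp⟩, ?_⟩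
    intro hc
    have huw₀ : u = w₀ := by rw [← hf.1 u, hc, hfw₀]
    exact hfuu (by rw [hc, ← huw₀])
  have hinj : Set.InjOn f NB := fun a _ b _ hab => by rw [← hf.1 a, hab, hf.1 b]
  have himg : f '' NB ⊆ B \ {w₀} := by
    rintro _ ⟨u, huNB, rfl⟩
    exact ⟨(hmap u huNB).1, (hmap u huNB).2⟩
  have hcard : NB.ncard < B.ncard := by
    have h1 : NB.ncard = (f '' NB).ncard := (Set.ncard_image_of_injOn hinj).symm
    have h2 : (f '' NB).ncard ≤ (B \ {w₀}).ncard :=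
      Set.ncard_le_ncard himg (Set.toFinite _)
    have h3 : (B \ {w₀}).ncard < B.ncard :=
      Set.ncard_diff_singleton_lt_of_mem hw₀B (Set.toFinite _)
    omega
  have hgt : α * (Fintype.card (Fin t)) < B.ncard := by
    by_contra hle
    push_neg at hle
    have := hexp B hle
    rw [← hNBdef] at this
    omega
  have hsub : B ⊆ missedSet G := by
    rintro x ⟨hxv, h, hh, hhs, hhv, hhx⟩
    obtain ⟨M', hM', hM'v⟩ := exists_matching_of_fn hh
    refine ⟨M', ⟨hM', ?_⟩, ?_⟩
    · intro M'' hM''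
      obtain ⟨f'', hf'', hf''s⟩ := exists_fn_of_matching hM''
      rw [hM'v, hhs, ← hf''s]
      exact hs _ hf''
    · rw [hM'v]
      exact fun hc => hc hhx
  have hle2 : (B.ncard : ℝ) ≤ ((missedSet G).ncard : ℝ) := by
    exact_mod_cast Set.ncard_le_ncard hsub (Set.toFinite _)
  calc α * t = α * (Fintype.card (Fin t)) := by rw [Fintype.card_fin]
    _ < B.ncard := hgt
    _ ≤ ((missedSet G).ncard : ℝ) := hle2
end

section
/- Let $G$ be a connected $(\alpha,2)$-expander graph on $n$ vertices that is not Hamiltonian, let $P$ be a longest path of $G$ and $a$ an endpoint of $P$. Then $|\operatorname{END}(P,a)| > \alpha n$. -/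
open SimpleGraph

variable {V : Type*} [Fintype V] [DecidableEq V]

/-- `G` on `n` vertices is an `(α,2)`-expander: every `X` with `|X| ≤ α n`
satisfies `|N(X)| ≥ 2|X|`, where `N(X)` is the external neighborhood. -/
def IsTwoExpander (G : SimpleGraph V) (α : ℝ) : Prop :=
  ∀ X : Set V, (X.ncard : ℝ) ≤ α * Fintype.card V →
    2 * X.ncard ≤ {u | u ∉ X ∧ ∃ x ∈ X, G.Adj x u}.ncard

section ListLemmas

open List

variable {α : Type*}

/-- Two vertices are adjacent in the list `l` (consecutive in either order). -/
def AdjIn (l : List α) (x y : α) : Prop := [x, y] <:+: l ∨ [y, x] <:+: l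

lemma pair_infix_cons {a x y : α} {l : List α} :
    [x, y] <:+: (a :: l) ↔ (x = a ∧ l.head? = some y) ∨ [x, y] <:+: l := by
  rw [List.infix_cons_iff]
  constructor
  · rintro (⟨t, ht⟩ | h)
    · simp only [cons_append, cons.injEq] at ht
      obtain ⟨rfl, h2⟩ := ht
      left
      exact ⟨rfl, by rw [← h2]; simp⟩
    · right; exact h
  · rintro (⟨rfl, hy⟩ | h)
    · left
      cases l with
      | nil => simp at hy
      | cons b l' =>
        simp only [head?_cons, Option.some.injEq] at hy
        subst hy
        exact ⟨l', rfl⟩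
    · right; exact h

lemma pair_infix_append {A B : List α} {x y : α} :
    [x, y] <:+: (A ++ B) ↔
      [x, y] <:+: A ∨ (A.getLast? = some x ∧ B.head? = some y) ∨ [x, y] <:+: B := by
  induction A with
  | nil => simp
  | cons a A ih =>
    rw [cons_append, pair_infix_cons, ih, pair_infix_cons]
    cases A with
    | nil => simp; tauto
    | cons b A' =>
      rw [List.head?_append_of_ne_nil _ (by simp), List.getLast?_cons_cons]
      simp only [head?_cons]
      tauto

lemma pair_infix_reverse {l : List α} {x y : α} :
    [x, y] <:+: l.reverse ↔ [y, x] <:+: l := by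
  constructor
  · intro h
    have := List.reverse_infix.mpr h
    simpa using this
  · intro h
    have : [y, x].reverse <:+: l.reverse := List.reverse_infix.mpr h
    simpa using this

lemma pair_infix_middle {P X : List α} {p x y : α} :
    [x, y] <:+: (P ++ p :: X) ↔
      [x, y] <:+: P ∨ (P.getLast? = some x ∧ y = p) ∨
        (x = p ∧ X.head? = some y) ∨ [x, y] <:+: X := by
  rw [pair_infix_append, pair_infix_cons]
  simp only [head?_cons, Option.some.injEq]
  tauto

lemma mem_left_of_pair_infix {l : List α} {x y : α} (h : [x, y] <:+: l) : x ∈ l :=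
  h.subset (by simp)

lemma mem_right_of_pair_infix {l : List α} {x y : α} (h : [x, y] <:+: l) : y ∈ l :=
  h.subset (by simp)

lemma nodup_succ_unique {l : List α} (h : l.Nodup) {v w w' : α}
    (h1 : [v, w] <:+: l) (h2 : [v, w'] <:+: l) : w = w' := by
  induction l with
  | nil => simp [List.infix_nil] at h1
  | cons a l ih =>
    rw [pair_infix_cons] at h1 h2
    rcases h1 with ⟨rfl, hw⟩ | h1
    · rcases h2 with ⟨-, hw'⟩ | h2
      · rw [hw] at hw'; exact (Option.some.injEq _ _ ▸ hw').symm ▸ rfl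
      · exact absurd (mem_left_of_pair_infix h2) (List.nodup_cons.mp h).1
    · rcases h2 with ⟨rfl, hw'⟩ | h2
      · exact absurd (mem_left_of_pair_infix h1) (List.nodup_cons.mp h).1
      · exact ih (List.nodup_cons.mp h).2 h1 h2

lemma nodup_pred_unique {l : List α} (h : l.Nodup) {v v' w : α}
    (h1 : [v, w] <:+: l) (h2 : [v', w] <:+: l) : v = v' := by
  induction l with
  | nil => simp [List.infix_nil] at h1
  | cons a l ih =>
    rw [pair_infix_cons] at h1 h2
    have key : ∀ {u : α}, l.head? = some w → ¬ ([u, w] <:+: l) := by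
      intro u hl hu
      cases l with
      | nil => simp at hl
      | cons b l' =>
        simp only [head?_cons, Option.some.injEq] at hl
        rw [pair_infix_cons] at hu
        have hnd' : (b :: l').Nodup := (List.nodup_cons.mp h).2
        have hwl : w ∉ l' := hl ▸ (List.nodup_cons.mp hnd').1
        rcases hu with ⟨-, hh⟩ | hu
        · exact hwl (List.mem_of_mem_head? hh)
        · exact hwl (mem_right_of_pair_infix hu)
    rcases h1 with ⟨rfl, hw⟩ | h1
    · rcases h2 with ⟨rfl, -⟩ | h2
      · rfl
      · exact absurd h2 (key hw)
    · rcases h2 with ⟨rfl, hw'⟩ | h2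
      · exact absurd h1 (key hw')
      · exact ih (List.nodup_cons.mp h).2 h1 h2

lemma getLast?_ne_of_pair_infix {l : List α} (h : l.Nodup) {v w : α}
    (hvw : [v, w] <:+: l) : l.getLast? ≠ some v := by
  obtain ⟨s, t, rfl⟩ := hvw
  intro hlast
  have h1 : (s ++ [v, w] ++ t).getLast? = (w :: t).getLast? := by
    rw [List.append_assoc, List.getLast?_append]
    have h2 : ([v, w] ++ t) = v :: w :: t := rfl
    rw [h2, List.getLast?_cons_cons]
    cases ht : (w :: t).getLast? with
    | none => simp at ht
    | some z => simp
  rw [h1] at hlast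
  have hvmem : v ∈ w :: t := List.mem_of_mem_getLast? hlast
  rw [List.append_assoc] at h
  have hnd : (v :: w :: t).Nodup := h.of_append_right
  exact (List.nodup_cons.mp hnd).1 hvmem

lemma getLast?_middle {P T : List α} {p : α} (hT : T ≠ []) :
    (P ++ p :: T).getLast? = some (T.getLast hT) := by
  rw [List.getLast?_append]
  have : (p :: T).getLast? = some ((p :: T).getLast (by simp)) :=
    List.getLast?_eq_getLast _
  rw [this, List.getLast_cons hT]
  simp

lemma getLast?_middle' {P T : List α} {p : α} (hT : T ≠ []) :
    (P ++ p :: T.reverse).getLast? = some (T.head hT) := by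
  have hTr : T.reverse ≠ [] := by simp [hT]
  rw [getLast?_middle hTr]
  have h1 : T.reverse.getLast? = T.head? := by
    rw [← List.head?_reverse, List.reverse_reverse]
  rw [List.getLast?_eq_getLast hTr, List.head?_eq_head hT] at h1
  exact h1

lemma head?_middle_eq {P T T' : List α} {p : α} :
    (P ++ p :: T).head? = (P ++ p :: T').head? := by
  cases P <;> simp

lemma pair_infix_of_decomp {P T : List α} {p : α} (hT : T ≠ []) :
    [p, T.head hT] <:+: (P ++ p :: T) := by
  rw [pair_infix_middle]
  right; right; left
  exact ⟨rfl, List.head?_eq_head hT⟩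

lemma exists_decomp {l : List α} {v : α} (hv : v ∈ l) (hlast : l.getLast? ≠ some v) :
    ∃ P T, ∃ _hT : T ≠ [], l = P ++ v :: T := by
  obtain ⟨P, T, rfl⟩ := List.append_of_mem hv
  cases T with
  | nil => exact absurd (by simp [List.getLast?_concat]) hlast
  | cons t T' => exact ⟨P, t :: T', by simp, rfl⟩

/-- Rotating at `p` does not change the adjacencies of a vertex distinct from
`p`, the head of `T`, and the last of `T`. -/
lemma adjIn_rotate {P T : List α} {p v w : α} (hT : T ≠ [])
    (hvp : v ≠ p) (hvb : v ≠ T.getLast hT) (hvh : v ≠ T.head hT) :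
    (AdjIn (P ++ p :: T.reverse) v w ↔ AdjIn (P ++ p :: T) v w) := by
  have hTr : T.reverse.head? = some (T.getLast hT) := by
    rw [List.head?_reverse, List.getLast?_eq_getLast hT]
  have hTh : T.head? = some (T.head hT) := List.head?_eq_head hT
  have h1 : T.reverse.head? ≠ some v := by
    rw [hTr]; exact fun h => hvb (Option.some.inj h).symm
  have h2 : T.head? ≠ some v := by
    rw [hTh]; exact fun h => hvh (Option.some.inj h).symm
  simp only [AdjIn, pair_infix_middle, pair_infix_reverse, hTr, hTh,
    Option.some.injEq]
  constructor
  · rintro ((h | ⟨h, rfl⟩ | ⟨rfl, h⟩ | h) | (h | ⟨h, rfl⟩ | ⟨rfl, h⟩ | h)) <;>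
      first
        | (exact absurd rfl hvp)
        | (exact absurd h.symm hvb)
        | tauto
  · rintro ((h | ⟨h, rfl⟩ | ⟨rfl, h⟩ | h) | (h | ⟨h, rfl⟩ | ⟨rfl, h⟩ | h)) <;>
      first
        | (exact absurd rfl hvp)
        | (exact absurd h.symm hvh)
        | tauto

end ListLemmas

/-- The "blocked" vertices: `END(L,a)` together with all vertices adjacent on
`L` to a vertex of `END(L,a)`. -/
def SBad (G : SimpleGraph V) (L : List V) : Set V :=
  ENDSet G L ∪ {w | ∃ v ∈ ENDSet G L, AdjIn L w v}

/-- The fundamental invariant of Pósa rotations. -/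
lemma rot_invariant (G : SimpleGraph V) (L : List V) (hL : IsPathList G L)
    {Q : List V} (hQ : Relation.ReflTransGen (Rotation G) L Q) :
    IsPathList G Q ∧ Q.head? = L.head? ∧ Q.Perm L ∧
      ∀ v ∉ SBad G L, ∀ w, (AdjIn Q v w ↔ AdjIn L v w) := by
  induction hQ with
  | refl => exact ⟨hL, rfl, List.Perm.refl L, fun v _ w => Iff.rfl⟩
  | @tail Q Q' hQ rot ih =>
    obtain ⟨hQpath, hQhead, hQperm, hQedges⟩ := ih
    obtain ⟨P, T, p, hT, hQeq, hQ'eq, hadj⟩ := rot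
    subst hQeq
    subst hQ'eq
    -- key endpoints
    have hbEnd : T.getLast hT ∈ ENDSet G L := ⟨_, hQ, getLast?_middle hT⟩
    have hQ' : Relation.ReflTransGen (Rotation G) L (P ++ p :: T.reverse) :=
      hQ.tail ⟨P, T, p, hT, rfl, rfl, hadj⟩
    have hhdEnd : T.head hT ∈ ENDSet G L := ⟨_, hQ', getLast?_middle' hT⟩
    have hpBad : p ∈ SBad G L := by
      by_contra hp
      have h1 : AdjIn (P ++ p :: T) p (T.head hT) :=
        Or.inl (pair_infix_of_decomp hT)
      have h2 := (hQedges p hp (T.head hT)).mp h1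
      exact hp (Or.inr ⟨T.head hT, hhdEnd, h2⟩)
    -- path structure
    have hperm : (P ++ p :: T.reverse).Perm (P ++ p :: T) :=
      List.Perm.append_left P ((T.reverse_perm).cons p)
    have hpath' : IsPathList G (P ++ p :: T.reverse) := by
      refine ⟨by simp, ?_, hperm.nodup_iff.mpr hQpath.2.2⟩
      have hc := hQpath.2.1
      unfold List.Chain' at hc ⊢
      rw [List.isChain_append] at hc
      obtain ⟨hcP, hcpT, hlink⟩ := hc
      rw [List.isChain_append]
      refine ⟨hcP, ?_, ?_⟩
      · rw [List.isChain_cons]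
        constructor
        · intro y hy
          rw [List.head?_reverse, List.getLast?_eq_getLast hT] at hy
          have : y = T.getLast hT := (Option.some.inj hy).symm
          subst this
          exact hadj.symm
        · rw [List.isChain_reverse]
          exact ((List.isChain_cons.mp hcpT).2).imp fun a b h => h.symm
      · intro x hx y hy
        simp only [List.head?_cons, Option.mem_def, Option.some.injEq] at hy
        subst hy
        exact hlink x hx p (by simp)
    refine ⟨hpath', ?_, hperm.trans hQperm, ?_⟩
    · rw [← hQhead]; exact head?_middle_eq
    · intro v hv w
      have hvp : v ≠ p := fun h => hv (h ▸ hpBad)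
      have hvb : v ≠ T.getLast hT := fun h => hv (Or.inl (h ▸ hbEnd))
      have hvh : v ≠ T.head hT := fun h => hv (Or.inl (h ▸ hhdEnd))
      rw [adjIn_rotate hT hvp hvb hvh]
      exact hQedges v hv w

/-- In a connected, non-Hamiltonian `(α,2)`-expander on `n` vertices, for any
longest path `L` with endpoint `a` we have `|END(L,a)| > α n`. -/
theorem ENDSet_large (G : SimpleGraph V) (α : ℝ) (hα : 0 < α)
    (hconn : G.Connected) (hexp : IsTwoExpander G α)
    (hnotham : ¬ G.IsHamiltonian)
    (L : List V) (a : V)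
    (hL : IsPathList G L) (ha : L.head? = some a)
    (hlongest : ∀ L' : List V, IsPathList G L' → L'.length ≤ L.length) :
    α * Fintype.card V < (ENDSet G L).ncard := by
  classical
  by_contra hcon
  push_neg at hcon
  have hexp' := hexp (ENDSet G L) hcon
  set S := ENDSet G L with hS
  set Tpred : Set V := {w | ∃ v ∈ S, [w, v] <:+: L} with hTpred
  set Tsucc : Set V := {w | ∃ v ∈ S, [v, w] <:+: L} with hTsucc
  -- Step A : external neighborhood of S is contained in Tpred ∪ Tsucc
  have stepA : {u | u ∉ S ∧ ∃ x ∈ S, G.Adj x u} ⊆ Tpred ∪ Tsucc := by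
    rintro u ⟨huS, x, hxS, hadj⟩
    obtain ⟨Q, hQ, hQx⟩ := hxS
    obtain ⟨hQpath, hQhead, hQperm, hQedges⟩ := rot_invariant G L hL hQ
    have hlenQ : Q.length = L.length := hQperm.length_eq
    have huQ : u ∈ Q := by
      by_contra huQ
      have hpath : IsPathList G (Q ++ [u]) := by
        refine ⟨by simp, ?_, ?_⟩
        · unfold List.Chain'
          rw [List.isChain_append]
          refine ⟨hQpath.2.1, List.isChain_singleton u, ?_⟩
          intro x' hx' y hy
          simp only [List.head?_cons, Option.mem_def, Option.some.injEq] at hy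
          subst hy
          rw [Option.mem_def, hQx] at hx'
          rw [← Option.some.inj hx']
          exact hadj
        · exact hQpath.2.2.append (List.nodup_singleton u)
            (by simpa [List.disjoint_singleton] using huQ)
      have hlen := hlongest _ hpath
      rw [List.length_append, hlenQ] at hlen
      simp at hlen
    have hux : u ≠ x := fun h => huS (h ▸ ⟨Q, hQ, hQx⟩)
    have hulast : Q.getLast? ≠ some u := by
      rw [hQx]; exact fun h => hux (Option.some.inj h).symm
    obtain ⟨P, T, hT, hQeq⟩ := exists_decomp huQ hulast
    have hb : T.getLast hT = x := by
      have h1 := getLast?_middle (P := P) (p := u) hT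
      rw [← hQeq, hQx] at h1
      exact (Option.some.inj h1).symm
    have rot : Rotation G Q (P ++ u :: T.reverse) :=
      ⟨P, T, u, hT, hQeq, rfl, by rw [hb]; exact hadj⟩
    have hhd : T.head hT ∈ S :=
      ⟨P ++ u :: T.reverse, hQ.tail rot, getLast?_middle' hT⟩
    have hadjQ : AdjIn Q u (T.head hT) := by
      rw [hQeq]; exact Or.inl (pair_infix_of_decomp hT)
    by_contra hu'
    have huBad : u ∉ SBad G L := by
      rintro (h | ⟨v, hv, h' | h'⟩)
      · exact huS h
      · exact hu' (Or.inl ⟨v, hv, h'⟩)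
      · exact hu' (Or.inr ⟨v, hv, h'⟩)
    have hadjL := (hQedges u huBad (T.head hT)).mp hadjQ
    exact huBad (Or.inr ⟨T.head hT, hhd, hadjL⟩)
  -- Step B : counting
  have hLnil := hL.1
  set lst := L.getLast hL.1 with hlst
  have hlastL : lst ∈ S := ⟨L, Relation.ReflTransGen.refl, List.getLast?_eq_getLast _⟩
  have h4 : 1 ≤ S.ncard := by
    rw [Nat.one_le_iff_ne_zero, ← Nat.pos_iff_ne_zero, Set.ncard_pos]
    exact ⟨lst, hlastL⟩
  have h1 : Tsucc.ncard ≤ (S \ {lst}).ncard := by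
    set F : V → V := fun w =>
      if h : ∃ v, v ∈ S ∧ [v, w] <:+: L then h.choose else w with hF
    apply Set.ncard_le_ncard_of_injOn F
    · intro w hw
      obtain ⟨v, hv, hvw⟩ := hw
      have hex : ∃ v, v ∈ S ∧ [v, w] <:+: L := ⟨v, hv, hvw⟩
      rw [hF]
      simp only [dif_pos hex]
      obtain ⟨hc1, hc2⟩ := hex.choose_spec
      refine ⟨hc1, ?_⟩
      simp only [Set.mem_singleton_iff]
      intro heq
      have := getLast?_ne_of_pair_infix hL.2.2 hc2
      rw [heq] at this
      exact this (List.getLast?_eq_getLast _)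
    · intro w hw w' hw' heq
      obtain ⟨v, hv, hvw⟩ := hw
      obtain ⟨v', hv', hvw'⟩ := hw'
      have hex : ∃ v, v ∈ S ∧ [v, w] <:+: L := ⟨v, hv, hvw⟩
      have hex' : ∃ v, v ∈ S ∧ [v, w'] <:+: L := ⟨v', hv', hvw'⟩
      rw [hF] at heq
      simp only [dif_pos hex, dif_pos hex'] at heq
      exact nodup_succ_unique hL.2.2 (heq ▸ hex.choose_spec.2) hex'.choose_spec.2
  have h2 : Tpred.ncard ≤ S.ncard := by
    set F : V → V := fun w =>
      if h : ∃ v, v ∈ S ∧ [w, v] <:+: L then h.choose else w with hF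
    apply Set.ncard_le_ncard_of_injOn F
    · intro w hw
      obtain ⟨v, hv, hvw⟩ := hw
      have hex : ∃ v, v ∈ S ∧ [w, v] <:+: L := ⟨v, hv, hvw⟩
      rw [hF]
      simp only [dif_pos hex]
      exact hex.choose_spec.1
    · intro w hw w' hw' heq
      obtain ⟨v, hv, hvw⟩ := hw
      obtain ⟨v', hv', hvw'⟩ := hw'
      have hex : ∃ v, v ∈ S ∧ [w, v] <:+: L := ⟨v, hv, hvw⟩
      have hex' : ∃ v, v ∈ S ∧ [w', v] <:+: L := ⟨v', hv', hvw'⟩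
      rw [hF] at heq
      simp only [dif_pos hex, dif_pos hex'] at heq
      exact nodup_pred_unique hL.2.2 (heq ▸ hex.choose_spec.2) hex'.choose_spec.2
  have h3 : (S \ {lst}).ncard = S.ncard - 1 :=
    Set.ncard_diff_singleton_of_mem hlastL
  have h5 : {u | u ∉ S ∧ ∃ x ∈ S, G.Adj x u}.ncard ≤ Tpred.ncard + Tsucc.ncard :=
    le_trans (Set.ncard_le_ncard stepA) (Set.ncard_union_le _ _)
  omega
end
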